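/- arXiv:1208.5361 — 9 statements merged into one kernel-verified Lean document; each statement's English description precedes it below -/
import Mathlib

section
/- Let n ≥ 1 and let f : ℝⁿ → ℝ be a smooth convex function with f(0) = 0, ∇f(0) = 0, and positive definite Hessian D²f(0). Then lim_{t → 0⁺} t^{-n/2} · vol({x ∈ ℝⁿ : f(x) < t}) = (√2)ⁿ · ω_n / √(det D²f(0)). -/
open MeasureTheory Filter
open scoped RealInnerProductSpace Topology

/-- The Hessian matrix of `f : ℝⁿ → ℝ` at a point `x`, with entries the second
partial derivatives of `f`. -/
noncomputable def hessianMatrix {n : ℕ} (f : EuclideanSpace ℝ (Fin n) → ℝ)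
    (x : EuclideanSpace ℝ (Fin n)) : Matrix (Fin n) (Fin n) ℝ :=
  Matrix.of fun i j =>
    iteratedFDeriv ℝ 2 f x ![EuclideanSpace.single i 1, EuclideanSpace.single j 1]


variable {n : ℕ}

open scoped MatrixOrder

lemma det_toEuclideanLin (M : Matrix (Fin n) (Fin n) ℝ) :
    LinearMap.det (Matrix.toEuclideanLin M) = M.det := by
  rw [Matrix.toEuclideanLin_eq_toLin, LinearMap.det_toLin]

lemma psd_det_nonneg {M : Matrix (Fin n) (Fin n) ℝ} (hM : M.PosSemidef) : 0 ≤ M.det := by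
  rw [hM.1.det_eq_prod_eigenvalues]
  exact Finset.prod_nonneg fun i _ => hM.eigenvalues_nonneg i

lemma sqrt_det {M : Matrix (Fin n) (Fin n) ℝ} (hM : M.PosDef) :
    Real.sqrt M.det = (CFC.sqrt M).det := by
  have h2 : M.det = (CFC.sqrt M).det * (CFC.sqrt M).det := by
    rw [← Matrix.det_mul, CFC.sqrt_mul_sqrt_self M (Matrix.PosSemidef.nonneg hM.posSemidef)]
  rw [h2, Real.sqrt_mul_self (psd_det_nonneg (Matrix.nonneg_iff_posSemidef.1 (CFC.sqrt_nonneg M)))]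

lemma quad_eq_norm_sq {M : Matrix (Fin n) (Fin n) ℝ} (hM : M.PosDef)
    (x : EuclideanSpace ℝ (Fin n)) :
    ⟪x, Matrix.toEuclideanLin M x⟫ =
      ‖Matrix.toEuclideanLin (CFC.sqrt M) x‖ ^ 2 := by
  set S := (CFC.sqrt M) with hS
  have hsymm : (Matrix.toEuclideanLin S).IsSymmetric :=
    Matrix.isHermitian_iff_isSymmetric.1 (Matrix.nonneg_iff_posSemidef.1 (CFC.sqrt_nonneg M)).1
  rw [← real_inner_self_eq_norm_sq, hsymm x (Matrix.toEuclideanLin S x)]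
  congr 1
  rw [Matrix.toEuclideanLin_apply, Matrix.toEuclideanLin_apply, Matrix.toEuclideanLin_apply]
  simp [Matrix.mulVec_mulVec, CFC.sqrt_mul_sqrt_self M (Matrix.PosSemidef.nonneg hM.posSemidef)]
  rw [hS, CFC.sqrt_mul_sqrt_self M (Matrix.PosSemidef.nonneg hM.posSemidef)]

lemma vol_quad_lt (hn : 1 ≤ n) {M : Matrix (Fin n) (Fin n) ℝ} (hM : M.PosDef)
    {s : ℝ} (hs : 0 < s) :
    volume {x : EuclideanSpace ℝ (Fin n) | ⟪x, Matrix.toEuclideanLin M x⟫ < s} =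
      ENNReal.ofReal (Real.sqrt s ^ n / Real.sqrt M.det) *
        volume (Metric.ball (0 : EuclideanSpace ℝ (Fin n)) 1) := by
  have : Nontrivial (EuclideanSpace ℝ (Fin n)) :=
    ⟨EuclideanSpace.single ⟨0, hn⟩ 1, 0, by
      intro h
      simpa using congrFun (congrArg (WithLp.equiv 2 _) h) ⟨0, hn⟩⟩
  set S := (CFC.sqrt M) with hSdef
  set T := Matrix.toEuclideanLin S with hTdef
  have hdetS : 0 < S.det := by
    rw [← sqrt_det hM]
    exact Real.sqrt_pos.2 hM.det_pos
  have hdetT : LinearMap.det T ≠ 0 := by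
    rw [hTdef, det_toEuclideanLin]; exact hdetS.ne'
  have hset : {x : EuclideanSpace ℝ (Fin n) | ⟪x, Matrix.toEuclideanLin M x⟫ < s} =
      T ⁻¹' Metric.ball 0 (Real.sqrt s) := by
    ext x
    simp only [Set.mem_setOf_eq, Set.mem_preimage, Metric.mem_ball, dist_zero_right]
    rw [quad_eq_norm_sq hM x, ← hTdef]
    rw [show ‖T x‖ < Real.sqrt s ↔ ‖T x‖ ^ 2 < s from
      ⟨fun h => (Real.lt_sqrt (norm_nonneg _)).1 h, fun h => (Real.lt_sqrt (norm_nonneg _)).2 h⟩]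
  rw [hset, MeasureTheory.Measure.addHaar_preimage_linearMap volume hdetT,
    MeasureTheory.Measure.addHaar_ball volume _ (Real.sqrt_nonneg s),
    finrank_euclideanSpace_fin, sqrt_det hM]
  rw [← mul_assoc, ← ENNReal.ofReal_mul (by positivity)]
  congr 2
  · rw [det_toEuclideanLin, abs_of_pos (by positivity)]
    field_simp
    exact (div_self hdetS.ne').symm

lemma quad_pos {M : Matrix (Fin n) (Fin n) ℝ} (hM : M.PosDef)
    {x : EuclideanSpace ℝ (Fin n)} (hx : x ≠ 0) :
    0 < ⟪x, Matrix.toEuclideanLin M x⟫ := by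
  rw [quad_eq_norm_sq hM x]
  have hdetS : LinearMap.det (Matrix.toEuclideanLin (CFC.sqrt M)) ≠ 0 := by
    rw [det_toEuclideanLin, ← sqrt_det hM]
    exact (Real.sqrt_pos.2 hM.det_pos).ne'
  have hinj := (LinearMap.equivOfDetNeZero _ hdetS).injective
  have : Matrix.toEuclideanLin (CFC.sqrt M) x ≠ 0 := by
    intro h
    exact hx (hinj (by simpa using h))
  have h0 : 0 < ‖Matrix.toEuclideanLin (CFC.sqrt M) x‖ := norm_pos_iff.2 this
  positivity

lemma quad_smul (M : Matrix (Fin n) (Fin n) ℝ) (r : ℝ) (x : EuclideanSpace ℝ (Fin n)) :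
    ⟪r • x, Matrix.toEuclideanLin M (r • x)⟫ = r ^ 2 * ⟪x, Matrix.toEuclideanLin M x⟫ := by
  rw [_root_.map_smul, real_inner_smul_left, real_inner_smul_right]
  ring

lemma quad_continuous (M : Matrix (Fin n) (Fin n) ℝ) :
    Continuous fun x : EuclideanSpace ℝ (Fin n) => ⟪x, Matrix.toEuclideanLin M x⟫ :=
  continuous_id.inner (Matrix.toEuclideanLin M).continuous_of_finiteDimensional

lemma exists_quad_lower (hn : 1 ≤ n) {M : Matrix (Fin n) (Fin n) ℝ} (hM : M.PosDef) :
    ∃ c > 0, ∀ x : EuclideanSpace ℝ (Fin n),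
      c * ‖x‖ ^ 2 ≤ ⟪x, Matrix.toEuclideanLin M x⟫ := by
  have : Nontrivial (EuclideanSpace ℝ (Fin n)) :=
    ⟨EuclideanSpace.single ⟨0, hn⟩ 1, 0, by
      intro h
      simpa using congrFun (congrArg (WithLp.equiv 2 _) h) ⟨0, hn⟩⟩
  have hsne : (Metric.sphere (0 : EuclideanSpace ℝ (Fin n)) 1).Nonempty :=
    NormedSpace.sphere_nonempty.2 zero_le_one
  obtain ⟨x₀, hx₀, hmin⟩ := (isCompact_sphere (0 : EuclideanSpace ℝ (Fin n)) 1).exists_isMinOn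
    hsne (quad_continuous M).continuousOn
  have hx₀ne : x₀ ≠ 0 := by
    intro h
    simp [h] at hx₀
  refine ⟨⟪x₀, Matrix.toEuclideanLin M x₀⟫, quad_pos hM hx₀ne, fun x => ?_⟩
  rcases eq_or_ne x 0 with rfl | hx
  · simp
  · have hxn : ‖x‖ ≠ 0 := norm_ne_zero_iff.2 hx
    have hmem : ‖x‖⁻¹ • x ∈ Metric.sphere (0 : EuclideanSpace ℝ (Fin n)) 1 := by
      simp [norm_smul, abs_of_nonneg (inv_nonneg.2 (norm_nonneg x)), inv_mul_cancel₀ hxn]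
    have := hmin hmem
    rw [Set.mem_setOf_eq] at this  -- maybe unneeded
    have h2 := quad_smul M (‖x‖⁻¹) x
    -- ⟪x₀,Mx₀⟫ ≤ ‖x‖⁻² ⟪x,Mx⟫
    have h3 : ⟪x₀, Matrix.toEuclideanLin M x₀⟫ ≤ (‖x‖⁻¹) ^ 2 * ⟪x, Matrix.toEuclideanLin M x⟫ := by
      rw [← h2]; exact this
    calc ⟪x₀, Matrix.toEuclideanLin M x₀⟫ * ‖x‖ ^ 2
        ≤ ((‖x‖⁻¹) ^ 2 * ⟪x, Matrix.toEuclideanLin M x⟫) * ‖x‖ ^ 2 := by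
          apply mul_le_mul_of_nonneg_right h3 (by positivity)
      _ = ⟪x, Matrix.toEuclideanLin M x⟫ := by
          field_simp

lemma taylor_bound {f : EuclideanSpace ℝ (Fin n) → ℝ} (hf : ContDiff ℝ (⊤ : ℕ∞) f)
    (hf0 : f 0 = 0) (hgrad : fderiv ℝ f 0 = 0) {ε : ℝ} (hε : 0 < ε) :
    ∃ δ > 0, ∀ x : EuclideanSpace ℝ (Fin n), ‖x‖ ≤ δ →
      |f x - (1/2) * fderiv ℝ (fderiv ℝ f) 0 x x| ≤ ε * ‖x‖ ^ 2 := by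
  have htop : ((⊤ : ℕ∞) : WithTop ℕ∞) + 1 ≤ ((⊤ : ℕ∞) : WithTop ℕ∞) := by
    exact_mod_cast le_rfl
  have h1top : (1 : WithTop ℕ∞) ≤ ((⊤ : ℕ∞) : WithTop ℕ∞) := by exact_mod_cast le_top
  have hg : ContDiff ℝ (⊤ : ℕ∞) (fderiv ℝ f) := hf.fderiv_right htop
  set B := fderiv ℝ (fderiv ℝ f) 0 with hBdef
  have hfd : Differentiable ℝ f := hf.differentiable (by simp)
  have hgd : Differentiable ℝ (fderiv ℝ f) := hg.differentiable (by simp)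
  have hBsymm : ∀ v w, B v w = B w v :=
    second_derivative_symmetric (fun y => (hfd y).hasFDerivAt) ((hgd 0).hasFDerivAt)
  have hcont : Continuous (fderiv ℝ (fderiv ℝ f)) := (hg.fderiv_right htop).continuous
  obtain ⟨δ, hδpos, hδ⟩ : ∃ δ > 0, ∀ z : EuclideanSpace ℝ (Fin n), ‖z‖ ≤ δ →
      ‖fderiv ℝ (fderiv ℝ f) z - B‖ ≤ ε := by
    rcases (Metric.continuousAt_iff (f := fderiv ℝ (fderiv ℝ f)) (a := 0)).1 hcont.continuousAt ε hε with ⟨δ, hδpos, hδ⟩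
    refine ⟨δ / 2, by linarith, fun z hz => ?_⟩
    have hz' : dist z 0 < δ := by rw [dist_zero_right]; linarith
    have h2 := hδ hz'
    replace h2 : ‖fderiv ℝ (fderiv ℝ f) z - B‖ < ε :=
      lt_of_eq_of_lt (dist_eq_norm (fderiv ℝ (fderiv ℝ f) z) B).symm h2
    exact le_of_lt h2
  set G : EuclideanSpace ℝ (Fin n) → (EuclideanSpace ℝ (Fin n) →L[ℝ] ℝ) :=
    fun y => fderiv ℝ f y - B y with hGdef
  have hG' : ∀ a, HasFDerivAt G (fderiv ℝ (fderiv ℝ f) a - B) a := fun a =>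
    ((hgd a).hasFDerivAt).sub B.hasFDerivAt
  have hG0 : G 0 = 0 := by simp [hGdef, hgrad]
  have hGbound : ∀ y : EuclideanSpace ℝ (Fin n), ‖y‖ ≤ δ → ‖G y‖ ≤ ε * ‖y‖ := by
    intro y hy
    have hmvt := Convex.norm_image_sub_le_of_norm_hasFDerivWithin_le
      (f := G) (f' := fun z => fderiv ℝ (fderiv ℝ f) z - B)
      (s := Metric.closedBall (0 : EuclideanSpace ℝ (Fin n)) δ) (C := ε)
      (x := 0) (y := y)
      (fun z _ => (hG' z).hasFDerivWithinAt)
      (fun z hz => hδ z (by simpa [dist_zero_right] using hz))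
      (convex_closedBall _ _)
      (by simp [hδpos.le])
      (by simpa [dist_zero_right] using hy)
    simpa [hG0] using hmvt
  set φ : EuclideanSpace ℝ (Fin n) → ℝ := fun x => f x - (1/2) * B x x with hφdef
  have hφ' : ∀ a, HasFDerivAt φ (G a) a := by
    intro a
    have hbil := (B.isBoundedBilinearMap).hasFDerivAt (a, a)
    have hdiag : HasFDerivAt (fun y : EuclideanSpace ℝ (Fin n) => (y, y))
        ((ContinuousLinearMap.id ℝ _).prod (ContinuousLinearMap.id ℝ _)) a :=
      (hasFDerivAt_id a).prodMk (hasFDerivAt_id a)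
    have hQ0 := hbil.comp (f := fun y : EuclideanSpace ℝ (Fin n) => (y, y)) (x := a) hdiag
    have hQ : HasFDerivAt (fun y : EuclideanSpace ℝ (Fin n) => B y y)
        ((B.isBoundedBilinearMap.deriv (a, a)).comp
          ((ContinuousLinearMap.id ℝ _).prod (ContinuousLinearMap.id ℝ _))) a := hQ0
    have h1 := ((hfd a).hasFDerivAt).sub (hQ.const_mul (1/2 : ℝ))
    have heq : fderiv ℝ f a - (1/2 : ℝ) • ((B.isBoundedBilinearMap.deriv (a, a)).comp
          ((ContinuousLinearMap.id ℝ _).prod (ContinuousLinearMap.id ℝ _))) = G a := by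
      ext h
      simp only [hGdef, ContinuousLinearMap.coe_sub', Pi.sub_apply,
        ContinuousLinearMap.coe_smul', Pi.smul_apply, ContinuousLinearMap.coe_comp',
        Function.comp_apply, ContinuousLinearMap.prod_apply, ContinuousLinearMap.coe_id', id_eq,
        IsBoundedBilinearMap.deriv_apply, smul_eq_mul]
      rw [hBsymm h a]
      ring
    rw [heq] at h1
    exact h1
  have hφ0 : φ 0 = 0 := by simp [hφdef, hf0]
  refine ⟨δ, hδpos, fun x hx => ?_⟩
  have hmvt := Convex.norm_image_sub_le_of_norm_hasFDerivWithin_le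
    (f := φ) (f' := fun z => G z)
    (s := Metric.closedBall (0 : EuclideanSpace ℝ (Fin n)) ‖x‖) (C := ε * ‖x‖)
    (x := 0) (y := x)
    (fun z _ => (hφ' z).hasFDerivWithinAt)
    (fun z hz => by
      have hz' : ‖z‖ ≤ ‖x‖ := by simpa [dist_zero_right] using hz
      exact (hGbound z (hz'.trans hx)).trans (mul_le_mul_of_nonneg_left hz' hε.le))
    (convex_closedBall _ _)
    (by simp)
    (by simp [dist_zero_right])
  rw [hφ0, sub_zero, sub_zero] at hmvt
  calc |f x - (1/2) * B x x| = ‖φ x‖ := by rw [Real.norm_eq_abs]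
    _ ≤ ε * ‖x‖ * ‖x‖ := hmvt
    _ = ε * ‖x‖ ^ 2 := by ring

lemma bilin_expand (B : EuclideanSpace ℝ (Fin n) →L[ℝ] EuclideanSpace ℝ (Fin n) →L[ℝ] ℝ)
    (x : EuclideanSpace ℝ (Fin n)) :
    B x x = ⟪x, Matrix.toEuclideanLin
      (Matrix.of fun i j => B (EuclideanSpace.single i 1) (EuclideanSpace.single j 1)) x⟫ := by
  set H : Matrix (Fin n) (Fin n) ℝ :=
    Matrix.of fun i j => B (EuclideanSpace.single i 1) (EuclideanSpace.single j 1) with hH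
  have hx : x = ∑ i, x i • EuclideanSpace.single i (1:ℝ) := by
    have h := (EuclideanSpace.basisFun (Fin n) ℝ).sum_repr x
    simp only [EuclideanSpace.basisFun_apply, EuclideanSpace.basisFun_repr] at h
    exact h.symm
  have hrhs : ⟪x, Matrix.toEuclideanLin H x⟫ = ∑ i, ∑ j, x i * (H i j * x j) := by
    rw [PiLp.inner_apply]
    refine Finset.sum_congr rfl fun i _ => ?_
    have : Matrix.toEuclideanLin H x i = ∑ j, H i j * x j := rfl
    simp [this, Finset.mul_sum]
    rw [mul_comm, Finset.mul_sum]
  rw [hrhs]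
  have h1 : ∀ u : EuclideanSpace ℝ (Fin n),
      B u x = ∑ j, x j * B u (EuclideanSpace.single j 1) := by
    intro u
    conv_lhs => rw [hx]
    rw [map_sum]
    exact Finset.sum_congr rfl fun j _ => by rw [_root_.map_smul, smul_eq_mul]
  have h2 : ∀ v : EuclideanSpace ℝ (Fin n),
      B x v = ∑ i, x i * B (EuclideanSpace.single i 1) v := by
    intro v
    conv_lhs => rw [hx]
    rw [map_sum, ContinuousLinearMap.sum_apply]
    exact Finset.sum_congr rfl fun i _ => by
      rw [_root_.map_smul, ContinuousLinearMap.smul_apply, smul_eq_mul]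
  rw [h1 x]
  rw [show ∑ j, x j * B x (EuclideanSpace.single j 1)
      = ∑ j, ∑ i, x j * (x i * B (EuclideanSpace.single i 1) (EuclideanSpace.single j 1)) from
    Finset.sum_congr rfl fun j _ => by rw [h2, Finset.mul_sum]]
  rw [Finset.sum_comm]
  exact Finset.sum_congr rfl fun i _ => Finset.sum_congr rfl fun j _ => by
    simp only [hH, Matrix.of_apply]
    ring

set_option maxHeartbeats 1000000 in
theorem area_section_limit (n : ℕ) (hn : 1 ≤ n) (f : EuclideanSpace ℝ (Fin n) → ℝ)
    (hf : ContDiff ℝ (⊤ : ℕ∞) f) (hconv : ConvexOn ℝ Set.univ f)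
    (hf0 : f 0 = 0) (hgrad : gradient f 0 = 0)
    (hhess : (hessianMatrix f 0).PosDef) :
    Tendsto (fun t : ℝ => t ^ (-(n : ℝ) / 2) * (volume {x | f x < t}).toReal)
      (𝓝[>] 0)
      (𝓝 (Real.sqrt 2 ^ n *
        (volume (Metric.ball (0 : EuclideanSpace ℝ (Fin n)) 1)).toReal /
        Real.sqrt (hessianMatrix f 0).det)) := by
  classical
  set H := hessianMatrix f 0 with hHdef
  set ω := (volume (Metric.ball (0 : EuclideanSpace ℝ (Fin n)) 1)).toReal with hωdef
  set d := Real.sqrt H.det with hddef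
  have hd : 0 < d := by rw [hddef]; exact Real.sqrt_pos.2 hhess.det_pos
  set K := ω / d with hKdef
  set C := Real.sqrt 2 ^ n * ω / d with hCdef
  clear_value C
  clear_value K
  clear_value d
  clear_value ω
  -- gradient to fderiv
  have hgrad' : fderiv ℝ f 0 = 0 := by
    have h1 : fderiv ℝ f 0 = (InnerProductSpace.toDual ℝ _) (gradient f 0) := by
      rw [gradient, LinearIsometryEquiv.apply_symm_apply]
    rw [h1, hgrad, map_zero]
  -- Hessian matrix as second fderiv bilinear form
  have hHeq : H = Matrix.of fun i j => (fderiv ℝ (fderiv ℝ f) 0)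
      (EuclideanSpace.single i 1) (EuclideanSpace.single j 1) := by
    ext i j
    rw [hHdef]
    show iteratedFDeriv ℝ 2 f 0 ![_, _] = _
    rw [iteratedFDeriv_two_apply]
    simp
  have hqeq : ∀ x : EuclideanSpace ℝ (Fin n),
      (fderiv ℝ (fderiv ℝ f) 0) x x = ⟪x, Matrix.toEuclideanLin H x⟫ := by
    intro x
    rw [hHeq]
    exact bilin_expand _ x
  clear_value H
  -- lower bound constant for the quadratic form
  obtain ⟨c, hc, hcq⟩ := exists_quad_lower hn hhess
  -- the limit via metric characterization
  rw [Metric.tendsto_nhds]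
  intro η hη
  -- choose ε
  have hG1 : ContinuousAt (fun e : ℝ => Real.sqrt (2/(1-e)) ^ n * K) 0 := by
    have h0 : ContinuousAt (fun e : ℝ => 2/(1-e)) 0 :=
      continuousAt_const.div (continuousAt_const.sub continuousAt_id) (by norm_num)
    exact ((Real.continuous_sqrt.continuousAt.comp h0).pow n).mul continuousAt_const
  have hG2 : ContinuousAt (fun e : ℝ => Real.sqrt (2/(1+e)) ^ n * K) 0 := by
    have h0 : ContinuousAt (fun e : ℝ => 2/(1+e)) 0 :=
      continuousAt_const.div (continuousAt_const.add continuousAt_id) (by norm_num)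
    exact ((Real.continuous_sqrt.continuousAt.comp h0).pow n).mul continuousAt_const
  have hGval : Real.sqrt (2/(1-(0:ℝ))) ^ n * K = C := by
    rw [hKdef, hCdef]; norm_num; ring
  have hGval2 : Real.sqrt (2/(1+(0:ℝ))) ^ n * K = C := by
    rw [hKdef, hCdef]; norm_num; ring
  have hv1 : Real.sqrt (2/(1-(0:ℝ))) ^ n * K < C + η := by rw [hGval]; linarith
  have hv2 : C - η < Real.sqrt (2/(1+(0:ℝ))) ^ n * K := by rw [hGval2]; linarith
  have hev1 : ∀ᶠ e in 𝓝[>] (0:ℝ), Real.sqrt (2/(1-e)) ^ n * K < C + η :=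
    (hG1.tendsto.mono_left nhdsWithin_le_nhds).eventually_lt_const hv1
  have hev2 : ∀ᶠ e in 𝓝[>] (0:ℝ), C - η < Real.sqrt (2/(1+e)) ^ n * K :=
    (hG2.tendsto.mono_left nhdsWithin_le_nhds).eventually_const_lt hv2
  have hev3 : ∀ᶠ e in 𝓝[>] (0:ℝ), e ∈ Set.Ioo (0:ℝ) (1/2) :=
    Ioo_mem_nhdsGT_of_mem ⟨le_rfl, by norm_num⟩
  obtain ⟨ε, hlt1, hlt2, hε0, hε12⟩ :
      ∃ ε : ℝ, (Real.sqrt (2/(1-ε)) ^ n * K < C + η) ∧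
        (C - η < Real.sqrt (2/(1+ε)) ^ n * K) ∧ 0 < ε ∧ ε < 1/2 := by
    rcases ((hev1.and (hev2.and hev3))).exists with ⟨ε, h1, h2, h3⟩
    exact ⟨ε, h1, h2, h3.1, h3.2⟩
  have hε1 : ε < 1 := by linarith
  -- Taylor bound with ε' = ε * c / 2
  obtain ⟨δ, hδpos, hδ⟩ := taylor_bound hf hf0 hgrad' (ε := ε * c / 2) (by positivity)
  -- two-sided bound on f near 0
  have hbound : ∀ x : EuclideanSpace ℝ (Fin n), ‖x‖ ≤ δ →
      (1-ε)/2 * ⟪x, Matrix.toEuclideanLin H x⟫ ≤ f x ∧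
      f x ≤ (1+ε)/2 * ⟪x, Matrix.toEuclideanLin H x⟫ := by
    intro x hx
    have h1 := hδ x hx
    rw [hqeq x] at h1
    have hQc := hcq x
    set Q : ℝ := ⟪x, Matrix.toEuclideanLin H x⟫ with hQ
    clear_value Q
    have h2 : ε / 2 * (c * ‖x‖ ^ 2) ≤ ε / 2 * Q :=
      mul_le_mul_of_nonneg_left hQc (by positivity)
    have h3 := abs_le.1 h1
    constructor
    · linarith [h3.1]
    · linarith [h3.2]
  set m := (1-ε)/2 * (c * δ^2) with hmdef
  have hm : 0 < m := by
    rw [hmdef]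
    exact mul_pos (by linarith) (by positivity)
  -- outside the ball, f is at least m
  have hout : ∀ x : EuclideanSpace ℝ (Fin n), δ ≤ ‖x‖ → m ≤ f x := by
    intro x hx
    have hxpos : 0 < ‖x‖ := lt_of_lt_of_le hδpos hx
    set θ := δ / ‖x‖ with hθdef
    have hθ0 : 0 < θ := by positivity
    have hθ1 : θ ≤ 1 := by
      rw [hθdef, div_le_one hxpos]; exact hx
    set y := θ • x with hydef
    have hyn : ‖y‖ = δ := by
      rw [hydef, norm_smul, Real.norm_eq_abs, abs_of_pos hθ0, hθdef]
      field_simp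
    have hqy := hcq y
    have h1 := (hbound y (le_of_eq hyn)).1
    set Qy : ℝ := ⟪y, Matrix.toEuclideanLin H y⟫ with hQy
    clear_value Qy
    rw [hyn] at hqy
    have hfy : m ≤ f y := by
      have h2 : (1-ε)/2 * (c * δ^2) ≤ (1-ε)/2 * Qy :=
        mul_le_mul_of_nonneg_left hqy (by linarith)
      rw [hmdef]
      linarith
    have hconvy : f y ≤ θ * f x := by
      have h := hconv.2 (Set.mem_univ x) (Set.mem_univ (0 : EuclideanSpace ℝ (Fin n)))
        (le_of_lt hθ0) (by linarith : (0:ℝ) ≤ 1 - θ) (by ring)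
      simpa [hydef, hf0] using h
    have h5 : m ≤ θ * f x := le_trans hfy hconvy
    have h6 : 0 < θ * f x := lt_of_lt_of_le hm h5
    have hfx : 0 < f x := by
      rcases mul_pos_iff.1 h6 with ⟨_, h⟩ | ⟨h, _⟩
      · exact h
      · linarith
    calc m ≤ θ * f x := h5
      _ ≤ 1 * f x := mul_le_mul_of_nonneg_right hθ1 (le_of_lt hfx)
      _ = f x := one_mul _
  -- eventual estimate
  have hevt : ∀ᶠ t in 𝓝[>] (0:ℝ), t ∈ Set.Ioo 0 m := Ioo_mem_nhdsGT_of_mem ⟨le_rfl, hm⟩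
  filter_upwards [hevt] with t ht
  obtain ⟨ht0, htm⟩ := ht
  -- set inclusions
  have hsub1 : {x : EuclideanSpace ℝ (Fin n) | f x < t} ⊆
      {x | ⟪x, Matrix.toEuclideanLin H x⟫ < 2*t/(1-ε)} := by
    intro x hx
    simp only [Set.mem_setOf_eq] at hx ⊢
    have hxδ : ‖x‖ ≤ δ := by
      by_contra hcon
      push_neg at hcon
      exact absurd hx (not_lt.2 (le_trans (le_of_lt htm) (hout x hcon.le)))
    have h1 := (hbound x hxδ).1
    set Q : ℝ := ⟪x, Matrix.toEuclideanLin H x⟫ with hQ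
    clear_value Q
    rw [lt_div_iff₀ (by linarith : (0:ℝ) < 1 - ε)]
    linarith
  have hsub2 : {x : EuclideanSpace ℝ (Fin n) | ⟪x, Matrix.toEuclideanLin H x⟫ < 2*t/(1+ε)} ⊆
      {x | f x < t} := by
    intro x hx
    simp only [Set.mem_setOf_eq] at hx ⊢
    have hq2t : ⟪x, Matrix.toEuclideanLin H x⟫ < 2*t := by
      have : 2*t/(1+ε) ≤ 2*t := by
        apply div_le_self (by linarith) (by linarith)
      linarith
    have hcqx := hcq x
    set Q : ℝ := ⟪x, Matrix.toEuclideanLin H x⟫ with hQ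
    clear_value Q
    have hxδ : ‖x‖ ≤ δ := by
      have h2 : c * ‖x‖^2 < c * δ^2 := by
        have h3 : 2*t < c * δ^2 := by
          rw [hmdef] at htm
          have hcd : 0 ≤ ε * (c * δ^2) := by positivity
          linarith
        linarith
      have h4 := (mul_lt_mul_iff_right₀ hc).1 h2
      exact (lt_of_pow_lt_pow_left₀ 2 hδpos.le h4).le
    have h1 := (hbound x hxδ).2
    rw [← hQ] at h1
    have h5 : (1+ε)/2 * Q < t := by
      rw [lt_div_iff₀ (by linarith : (0:ℝ) < 1 + ε)] at hx
      linarith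
    linarith
  -- finiteness of the sublevel volume
  have hsubball : {x : EuclideanSpace ℝ (Fin n) | f x < t} ⊆ Metric.closedBall 0 δ := by
    intro x hx
    simp only [Set.mem_setOf_eq] at hx
    simp only [Metric.mem_closedBall, dist_zero_right]
    by_contra hcon
    push_neg at hcon
    exact absurd hx (not_lt.2 (le_trans (le_of_lt htm) (hout x hcon.le)))
  have hfin : volume {x : EuclideanSpace ℝ (Fin n) | f x < t} ≠ ⊤ :=
    ne_top_of_le_ne_top (MeasureTheory.measure_closedBall_lt_top).ne
      (measure_mono hsubball)
  -- volume values
  -- volume bounds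
  have hballfin : volume (Metric.ball (0 : EuclideanSpace ℝ (Fin n)) 1) ≠ ⊤ :=
    MeasureTheory.measure_ball_lt_top.ne
  have hvol1 : volume {x : EuclideanSpace ℝ (Fin n) | f x < t} ≤
      ENNReal.ofReal (Real.sqrt (2*t/(1-ε)) ^ n / d) *
        volume (Metric.ball (0 : EuclideanSpace ℝ (Fin n)) 1) := by
    calc volume {x : EuclideanSpace ℝ (Fin n) | f x < t}
        ≤ volume {x : EuclideanSpace ℝ (Fin n) |
            ⟪x, Matrix.toEuclideanLin H x⟫ < 2*t/(1-ε)} := measure_mono hsub1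
      _ = _ := by
          rw [hddef]
          exact vol_quad_lt hn hhess (s := 2*t/(1-ε)) (div_pos (by linarith) (by linarith))
  have hvol2 : ENNReal.ofReal (Real.sqrt (2*t/(1+ε)) ^ n / d) *
        volume (Metric.ball (0 : EuclideanSpace ℝ (Fin n)) 1) ≤
      volume {x : EuclideanSpace ℝ (Fin n) | f x < t} := by
    calc ENNReal.ofReal (Real.sqrt (2*t/(1+ε)) ^ n / d) *
          volume (Metric.ball (0 : EuclideanSpace ℝ (Fin n)) 1)
        = volume {x : EuclideanSpace ℝ (Fin n) |
            ⟪x, Matrix.toEuclideanLin H x⟫ < 2*t/(1+ε)} :=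
          by
            rw [hddef]
            exact (vol_quad_lt hn hhess (s := 2*t/(1+ε))
              (div_pos (by linarith) (by linarith))).symm
      _ ≤ _ := measure_mono hsub2
  have hup : (volume {x : EuclideanSpace ℝ (Fin n) | f x < t}).toReal ≤
      Real.sqrt (2*t/(1-ε)) ^ n / d * ω := by
    have h1 := ENNReal.toReal_mono
      (ENNReal.mul_ne_top ENNReal.ofReal_ne_top hballfin) hvol1
    rw [ENNReal.toReal_mul, ENNReal.toReal_ofReal
      (div_nonneg (by positivity) hd.le)] at h1
    rwa [hωdef]
  have hlo : Real.sqrt (2*t/(1+ε)) ^ n / d * ω ≤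
      (volume {x : EuclideanSpace ℝ (Fin n) | f x < t}).toReal := by
    have h1 := ENNReal.toReal_mono hfin hvol2
    rw [ENNReal.toReal_mul, ENNReal.toReal_ofReal
      (div_nonneg (by positivity) hd.le)] at h1
    rwa [hωdef]
  -- rpow algebra
  have hsqt : ∀ a : ℝ, 0 < a → Real.sqrt (2*t/a) = Real.sqrt t * Real.sqrt (2/a) := by
    intro a _
    rw [show 2*t/a = t * (2/a) by ring, Real.sqrt_mul ht0.le]
  have hpow : t ^ (-(n:ℝ)/2) * (Real.sqrt t)^n = 1 := by
    have h1 : (Real.sqrt t)^n = t ^ ((n:ℝ)/2) := by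
      rw [Real.sqrt_eq_rpow, ← Real.rpow_natCast (t ^ ((1:ℝ)/2)) n,
        ← Real.rpow_mul ht0.le, show (1:ℝ)/2 * n = (n:ℝ)/2 by ring]
    rw [h1, ← Real.rpow_add ht0, show -(n:ℝ)/2 + (n:ℝ)/2 = 0 by ring, Real.rpow_zero]
  have hFup : t ^ (-(n:ℝ)/2) * (volume {x : EuclideanSpace ℝ (Fin n) | f x < t}).toReal ≤
      Real.sqrt (2/(1-ε))^n * K := by
    have h2 : t ^ (-(n:ℝ)/2) * (Real.sqrt (2*t/(1-ε)) ^ n / d * ω)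
        = Real.sqrt (2/(1-ε))^n * K := by
      rw [hsqt (1-ε) (by linarith), mul_pow, hKdef]
      calc t ^ (-(n:ℝ)/2) * (Real.sqrt t ^ n * Real.sqrt (2/(1-ε)) ^ n / d * ω)
          = (t ^ (-(n:ℝ)/2) * Real.sqrt t ^ n) * (Real.sqrt (2/(1-ε)) ^ n * (ω / d)) := by
            ring
        _ = Real.sqrt (2/(1-ε)) ^ n * (ω / d) := by rw [hpow]; ring
    rw [← h2]
    exact mul_le_mul_of_nonneg_left hup (Real.rpow_nonneg ht0.le (-(n:ℝ)/2))
  have hFlo : Real.sqrt (2/(1+ε))^n * K ≤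
      t ^ (-(n:ℝ)/2) * (volume {x : EuclideanSpace ℝ (Fin n) | f x < t}).toReal := by
    have h2 : t ^ (-(n:ℝ)/2) * (Real.sqrt (2*t/(1+ε)) ^ n / d * ω)
        = Real.sqrt (2/(1+ε))^n * K := by
      rw [hsqt (1+ε) (by linarith), mul_pow, hKdef]
      calc t ^ (-(n:ℝ)/2) * (Real.sqrt t ^ n * Real.sqrt (2/(1+ε)) ^ n / d * ω)
          = (t ^ (-(n:ℝ)/2) * Real.sqrt t ^ n) * (Real.sqrt (2/(1+ε)) ^ n * (ω / d)) := by
            ring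
        _ = Real.sqrt (2/(1+ε)) ^ n * (ω / d) := by rw [hpow]; ring
    rw [← h2]
    exact mul_le_mul_of_nonneg_left hlo (Real.rpow_nonneg ht0.le (-(n:ℝ)/2))
  rw [Real.dist_eq, abs_sub_lt_iff]
  constructor
  · linarith
  · linarith
end

section
/- Let n ≥ 1 and let f : ℝⁿ → ℝ be a smooth convex function with f(0) = 0, ∇f(0) = 0, and positive definite Hessian D²f(0). Then lim_{t → 0⁺} t^{-n/2} · ∫_{{x : f(x) < t}} √(1 + ‖∇f(x)‖²) dx = (√2)ⁿ · ω_n / √(det D²f(0)). -/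
open MeasureTheory Filter Matrix
open scoped RealInnerProductSpace Topology

namespace SAL

variable {n : ℕ}
local notation "E" => EuclideanSpace ℝ (Fin n)

lemma taylor_bound (f : E → ℝ) (hf : ContDiff ℝ (⊤ : ℕ∞) f) (hf0 : f 0 = 0)
    (hgrad : fderiv ℝ f 0 = 0) {ε : ℝ} (hε : 0 < ε) :
    ∃ δ > 0, ∀ x : E, ‖x‖ < δ →
      |f x - (1/2) * fderiv ℝ (fderiv ℝ f) 0 x x| ≤ ε * ‖x‖ ^ 2 := by
  set F := fderiv ℝ f with hF
  set A := fderiv ℝ F 0 with hA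
  have hdF : ContDiff ℝ (⊤ : ℕ∞) F := hf.fderiv_right (le_refl _)
  have hFd : HasFDerivAt F A 0 := (hdF.differentiable (by simp) 0).hasFDerivAt
  have hlo : (fun h : E => F h - A h) =o[𝓝 0] fun h => h := by
    have := hasFDerivAt_iff_isLittleO_nhds_zero.1 hFd
    simpa [hgrad] using this
  have hev : ∀ᶠ y in 𝓝 (0 : E), ‖F y - A y‖ ≤ ε * ‖y‖ := hlo.def hε
  rcases Metric.eventually_nhds_iff_ball.1 hev with ⟨δ, hδ, hball⟩
  refine ⟨δ, hδ, fun x hx => ?_⟩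
  set K := (1/2) * A x x with hK
  set g : ℝ → ℝ := fun s => f (s • x) - s ^ 2 * K with hg
  have hderiv : ∀ s ∈ Set.Icc (0:ℝ) 1,
      HasDerivWithinAt g (F (s • x) x - s * (A x x)) (Set.Icc (0:ℝ) 1) s := by
    intro s _
    have h1 : HasDerivAt (fun s : ℝ => f (s • x)) (F (s • x) x) s := by
      have hc : HasDerivAt (fun s : ℝ => s • x) ((1:ℝ) • x) s :=
        (hasDerivAt_id s).smul_const x
      have := ((hf.differentiable (by simp) (s • x)).hasFDerivAt).comp_hasDerivAt s hc
      simpa [Function.comp_def] using this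
    have h2 : HasDerivAt (fun s : ℝ => s ^ 2 * K) (2 * s * K) s := by
      simpa [mul_comm] using ((hasDerivAt_pow 2 s).mul_const K)
    have := h1.sub h2
    have heq : F (s • x) x - 2 * s * K = F (s • x) x - s * (A x x) := by
      rw [hK]; ring
    exact (heq ▸ this).hasDerivWithinAt
  have hbound : ∀ s ∈ Set.Ico (0:ℝ) 1, ‖F (s • x) x - s * (A x x)‖ ≤ ε * ‖x‖ ^ 2 := by
    intro s hs
    have hsx : ‖s • x‖ < δ := by
      rw [norm_smul, Real.norm_eq_abs, abs_of_nonneg hs.1]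
      calc s * ‖x‖ ≤ 1 * ‖x‖ := by
            exact mul_le_mul_of_nonneg_right hs.2.le (norm_nonneg x)
        _ = ‖x‖ := one_mul _
        _ < δ := hx
    have hb := hball (s • x) (by simpa [Metric.mem_ball] using hsx)
    have hAs : A (s • x) x = s * (A x x) := by
      rw [_root_.map_smul]; rfl
    have : F (s • x) x - s * (A x x) = (F (s • x) - A (s • x)) x := by
      rw [ContinuousLinearMap.sub_apply, hAs]
    rw [this]
    calc ‖(F (s • x) - A (s • x)) x‖ ≤ ‖F (s • x) - A (s • x)‖ * ‖x‖ :=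
          (F (s • x) - A (s • x)).le_opNorm x
      _ ≤ (ε * ‖s • x‖) * ‖x‖ := by
          exact mul_le_mul_of_nonneg_right hb (norm_nonneg x)
      _ ≤ (ε * ‖x‖) * ‖x‖ := by
          refine mul_le_mul_of_nonneg_right (mul_le_mul_of_nonneg_left ?_ hε.le) (norm_nonneg x)
          rw [norm_smul, Real.norm_eq_abs, abs_of_nonneg hs.1]
          exact mul_le_of_le_one_left (norm_nonneg x) hs.2.le
      _ = ε * ‖x‖ ^ 2 := by ring
  have := norm_image_sub_le_of_norm_deriv_le_segment_01' hderiv hbound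
  have hg1 : g 1 = f x - K := by simp [hg]
  have hg0 : g 0 = 0 := by simp [hg, hf0]
  rw [hg1, hg0, sub_zero] at this
  simpa [hK, Real.norm_eq_abs] using this

lemma hessian_entry (f : E → ℝ) (i j : Fin n) :
    hessianMatrix f 0 i j =
      fderiv ℝ (fderiv ℝ f) 0 (EuclideanSpace.single i 1) (EuclideanSpace.single j 1) := by
  show iteratedFDeriv ℝ 2 f 0 ![_, _] = _
  rw [iteratedFDeriv_two_apply]
  simp

lemma sum_single (x : E) : ∑ i, x i • EuclideanSpace.single i (1:ℝ) = x := by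
  ext j
  have : (∑ i, x i • EuclideanSpace.single i (1:ℝ)) j
      = ∑ i, (x i • EuclideanSpace.single i (1:ℝ)) j := by
    simp only [WithLp.ofLp_sum, Finset.sum_apply]
  rw [this]
  simp [EuclideanSpace.single_apply]

lemma bilin_expand (A : E →L[ℝ] E →L[ℝ] ℝ) (u v : E) :
    A u v = ∑ i, ∑ j, u i * v j *
      A (EuclideanSpace.single i 1) (EuclideanSpace.single j 1) := by
  conv_lhs => rw [← sum_single u, ← sum_single v]
  rw [map_sum, Finset.sum_comm]
  refine Finset.sum_congr rfl fun i _ => ?_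
  rw [_root_.map_smul, map_sum, ContinuousLinearMap.sum_apply, Finset.smul_sum]
  refine Finset.sum_congr rfl fun j _ => ?_
  simp only [_root_.map_smul, ContinuousLinearMap.smul_apply, smul_eq_mul]
  ring

lemma quadratic_eq (f : E → ℝ) (x : E) :
    fderiv ℝ (fderiv ℝ f) 0 x x = x ⬝ᵥ (hessianMatrix f 0).mulVec x := by
  rw [bilin_expand]
  simp only [dotProduct, Matrix.mulVec, hessian_entry, Finset.mul_sum]
  refine Finset.sum_congr rfl fun i _ => Finset.sum_congr rfl fun j _ => ?_
  ring

lemma Qcont (H : Matrix (Fin n) (Fin n) ℝ) :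
    Continuous (fun x : E => x ⬝ᵥ H *ᵥ x) := by
  have h1 : Continuous (fun x : E => (Matrix.toEuclideanCLM (𝕜 := ℝ) H) x) :=
    (Matrix.toEuclideanCLM (𝕜 := ℝ) H).continuous
  have h2 : Continuous (fun x : E => ⟪x, (Matrix.toEuclideanCLM (𝕜 := ℝ) H) x⟫) :=
    continuous_id.inner h1
  have key : ∀ x : E, x ⬝ᵥ H *ᵥ x = ⟪x, (Matrix.toEuclideanCLM (𝕜 := ℝ) H) x⟫ := by
    intro x; rw [PiLp.inner_apply]; simp [dotProduct, mul_comm]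
  simp only [key]
  exact h2

lemma Qsmul (H : Matrix (Fin n) (Fin n) ℝ) (a : ℝ) (x : E) :
    (a • x) ⬝ᵥ H *ᵥ (a • x) = a ^ 2 * (x ⬝ᵥ H *ᵥ x) := by
  show (a • (x : Fin n → ℝ)) ⬝ᵥ H *ᵥ (a • (x : Fin n → ℝ)) = _
  rw [Matrix.mulVec_smul, smul_dotProduct, dotProduct_smul]
  simp [smul_eq_mul]; ring

lemma Qpos {H : Matrix (Fin n) (Fin n) ℝ} (hH : H.PosDef) {x : E} (hx : x ≠ 0) :
    0 < x ⬝ᵥ H *ᵥ x := by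
  have := hH.dotProduct_mulVec_pos (x := (x : Fin n → ℝ)) ?_
  · simpa using this
  · intro h
    apply hx
    ext i
    exact congrFun h i

lemma coercive (hn : 1 ≤ n) {H : Matrix (Fin n) (Fin n) ℝ} (hH : H.PosDef) :
    ∃ m > 0, ∀ x : E, m * ‖x‖ ^ 2 ≤ x ⬝ᵥ H *ᵥ x := by
  haveI : Nontrivial E := by
    refine ⟨EuclideanSpace.single ⟨0, hn⟩ 1, 0, fun h => ?_⟩
    have := congrArg (‖·‖) h
    simp [EuclideanSpace.norm_single] at this
  obtain ⟨x₀, hx₀, hmin⟩ := (isCompact_sphere (0:E) 1).exists_isMinOn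
    (NormedSpace.sphere_nonempty.2 zero_le_one) (Qcont H).continuousOn
  have hx₀norm : ‖x₀‖ = 1 := by simpa using hx₀
  have hx₀ne : x₀ ≠ 0 := by
    intro h; rw [h] at hx₀norm; simp at hx₀norm
  refine ⟨x₀ ⬝ᵥ H *ᵥ x₀, Qpos hH hx₀ne, fun x => ?_⟩
  rcases eq_or_ne x 0 with rfl | hx
  · simp
  · have hxn : (0:ℝ) < ‖x‖ := norm_pos_iff.2 hx
    have hu : (‖x‖⁻¹ • x) ∈ Metric.sphere (0:E) 1 := by
      simp [norm_smul, abs_of_pos (inv_pos.2 hxn), inv_mul_cancel₀ hxn.ne']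
    have h1 := hmin hu
    have h2 : (‖x‖⁻¹ • x) ⬝ᵥ H *ᵥ (‖x‖⁻¹ • x) = ‖x‖⁻¹ ^ 2 * (x ⬝ᵥ H *ᵥ x) := Qsmul H _ x
    have h3 : x₀ ⬝ᵥ H *ᵥ x₀ ≤ ‖x‖⁻¹ ^ 2 * (x ⬝ᵥ H *ᵥ x) := by
      rw [← h2]; exact h1
    calc (x₀ ⬝ᵥ H *ᵥ x₀) * ‖x‖ ^ 2 ≤ (‖x‖⁻¹ ^ 2 * (x ⬝ᵥ H *ᵥ x)) * ‖x‖ ^ 2 :=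
          mul_le_mul_of_nonneg_right h3 (by positivity)
      _ = x ⬝ᵥ H *ᵥ x := by
          field_simp

open scoped MatrixOrder in
lemma ellipsoid_volume (hn : 1 ≤ n) {H : Matrix (Fin n) (Fin n) ℝ} (hH : H.PosDef)
    {s : ℝ} (hs : 0 < s) :
    volume {x : E | x ⬝ᵥ H *ᵥ x < s} =
      ENNReal.ofReal (Real.sqrt s ^ n / Real.sqrt H.det) *
        volume (Metric.ball (0 : E) 1) := by
  haveI : Nontrivial E := by
    refine ⟨EuclideanSpace.single ⟨0, hn⟩ 1, 0, fun h => ?_⟩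
    have := congrArg (‖·‖) h
    simp [EuclideanSpace.norm_single] at this
  set S := CFC.sqrt H with hSdef
  have hSS : S * S = H := CFC.sqrt_mul_sqrt_self H hH.posSemidef.nonneg
  have hSherm : S.IsHermitian := (CFC.sqrt_nonneg H).posSemidef.1
  have hdetH : 0 < H.det := hH.det_pos
  have hdetS2 : S.det * S.det = H.det := by rw [← Matrix.det_mul, hSS]
  have hdetSnn : 0 ≤ S.det := by
    have hps := (CFC.sqrt_nonneg H).posSemidef
    have := hps.1.det_eq_prod_eigenvalues
    rw [this]
    exact Finset.prod_nonneg fun i _ => hps.eigenvalues_nonneg i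
  have hdetS : 0 < S.det := by
    rcases hdetSnn.lt_or_eq with h | h
    · exact h
    · exfalso; rw [← h] at hdetS2; simp at hdetS2; rw [← hdetS2] at hdetH; simp at hdetH
  have hdetSeq : S.det = Real.sqrt H.det := by
    rw [← hdetS2, Real.sqrt_mul_self hdetSnn]
  set T : E →ₗ[ℝ] E := Matrix.toEuclideanLin S with hT
  have hdetT : LinearMap.det T = S.det := by
    rw [hT, Matrix.toEuclideanLin_eq_toLin, LinearMap.det_toLin]
  have hnorm : ∀ x : E, ‖T x‖ ^ 2 = x ⬝ᵥ H *ᵥ x := by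
    intro x
    have h1 : ‖T x‖ ^ 2 = ⟪T x, T x⟫ := (real_inner_self_eq_norm_sq _).symm
    rw [h1]
    have h2 : ⟪T x, T x⟫ = (S *ᵥ x) ⬝ᵥ (S *ᵥ x) := by
      rw [PiLp.inner_apply]; rfl
    rw [h2, Matrix.dotProduct_mulVec]
    have h3 : (S *ᵥ (x : Fin n → ℝ)) ᵥ* S = H *ᵥ x := by
      have : Sᵀ = S := by simpa using hSherm.eq
      rw [← Matrix.mulVec_transpose, this, Matrix.mulVec_mulVec, hSS]
    rw [h3, dotProduct_comm]
  have hset : {x : E | x ⬝ᵥ H *ᵥ x < s} = T ⁻¹' (Metric.ball 0 (Real.sqrt s)) := by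
    ext x
    simp only [Set.mem_setOf_eq, Set.mem_preimage, Metric.mem_ball, dist_zero_right]
    rw [← hnorm x]
    constructor
    · intro h
      have := Real.sqrt_lt_sqrt (by positivity) h
      rwa [Real.sqrt_sq (norm_nonneg _)] at this
    · intro h
      have := pow_lt_pow_left₀ h (norm_nonneg _) two_ne_zero
      rwa [Real.sq_sqrt hs.le] at this
  rw [hset, MeasureTheory.Measure.addHaar_preimage_linearMap volume (by rw [hdetT]; exact hdetS.ne') _]
  rw [Measure.addHaar_ball _ _ (Real.sqrt_nonneg s)]
  rw [hdetT, ← mul_assoc, ← ENNReal.ofReal_mul (by positivity)]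
  congr 2
  rw [finrank_euclideanSpace_fin, hdetSeq]
  rw [abs_of_pos (by rw [← hdetSeq]; exact inv_pos.2 hdetS)]
  rw [div_eq_mul_inv, mul_comm]


lemma sqrt_pow_eq_rpow {x : ℝ} (hx : 0 ≤ x) (n : ℕ) :
    Real.sqrt x ^ n = x ^ ((n : ℝ) / 2) := by
  rw [Real.sqrt_eq_rpow, ← Real.rpow_natCast (x ^ (1/2 : ℝ)) n, ← Real.rpow_mul hx]
  congr 1; ring

lemma rpow_calc (n : ℕ) {t b : ℝ} (ht : 0 < t) (hb : 0 < b) :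
    t ^ (-(n:ℝ)/2) * (Real.sqrt (2*t/b) ^ n) =
      Real.sqrt 2 ^ n * (b⁻¹) ^ ((n:ℝ)/2) := by
  have h2tb : (0:ℝ) ≤ 2*t/b := by positivity
  rw [sqrt_pow_eq_rpow h2tb, sqrt_pow_eq_rpow (by norm_num : (0:ℝ) ≤ 2)]
  have h : 2*t/b = t * (2 * b⁻¹) := by field_simp
  rw [h, Real.mul_rpow ht.le (by positivity),
    Real.mul_rpow (by norm_num) (by positivity), ← mul_assoc, ← mul_assoc,
    ← Real.rpow_add ht]
  have h0 : -(n:ℝ)/2 + (n:ℝ)/2 = 0 := by ring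
  rw [h0, Real.rpow_zero, one_mul]


set_option maxHeartbeats 2000000 in
lemma keybound (hn : 1 ≤ n) (f : E → ℝ)
    (hf : ContDiff ℝ (⊤ : ℕ∞) f) (hconv : ConvexOn ℝ Set.univ f)
    (hf0 : f 0 = 0) (hgrad : fderiv ℝ f 0 = 0)
    (hhess : (hessianMatrix f 0).PosDef) {ε : ℝ} (hε0 : 0 < ε) (hε1 : ε < 1) :
    ∀ᶠ t in 𝓝[>] (0:ℝ),
      ((1+ε)⁻¹) ^ ((n:ℝ)/2) *
          (Real.sqrt 2 ^ n * (volume (Metric.ball (0 : E) 1)).toReal /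
            Real.sqrt (hessianMatrix f 0).det) ≤
        t ^ (-(n:ℝ)/2) * ∫ x in {x | f x < t}, Real.sqrt (1 + ‖gradient f x‖ ^ 2) ∧
      t ^ (-(n:ℝ)/2) * ∫ x in {x | f x < t}, Real.sqrt (1 + ‖gradient f x‖ ^ 2) ≤
        (1+ε) * (((1-ε)⁻¹) ^ ((n:ℝ)/2) *
          (Real.sqrt 2 ^ n * (volume (Metric.ball (0 : E) 1)).toReal /
            Real.sqrt (hessianMatrix f 0).det)) := by
  have h1ε : (0:ℝ) < 1 - ε := by linarith
  have h1ε' : (0:ℝ) < 1 + ε := by linarith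
  set H := hessianMatrix f 0 with hHdef
  set ωn := volume (Metric.ball (0:E) 1) with hωdef
  have hωfin : ωn ≠ ⊤ := measure_ball_lt_top.ne
  have hdetH : 0 < H.det := hhess.det_pos
  have hsdet : 0 < Real.sqrt H.det := Real.sqrt_pos.2 hdetH
  set C : ℝ := Real.sqrt 2 ^ n * ωn.toReal / Real.sqrt H.det with hCdef
  obtain ⟨m, hm, hmQ⟩ := coercive hn hhess
  -- Taylor estimate
  obtain ⟨δ₁, hδ₁, hTay⟩ := taylor_bound f hf hf0 hgrad
    (show (0:ℝ) < ε * m / 2 by positivity)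
  have hTay' : ∀ x : E, ‖x‖ < δ₁ →
      |f x - (1/2) * (x ⬝ᵥ H *ᵥ x)| ≤ ε * ((1/2) * (x ⬝ᵥ H *ᵥ x)) := by
    intro x hx
    have h1 := hTay x hx
    rw [quadratic_eq] at h1
    refine h1.trans ?_
    have h2 := hmQ x
    nlinarith [sq_nonneg ‖x‖]
  have hupp : ∀ x : E, ‖x‖ < δ₁ → f x ≤ (1+ε) * ((1/2) * (x ⬝ᵥ H *ᵥ x)) := by
    intro x hx
    have := (abs_le.1 (hTay' x hx)).2
    linarith
  have hlow : ∀ x : E, ‖x‖ < δ₁ → (1-ε) * ((1/2) * (x ⬝ᵥ H *ᵥ x)) ≤ f x := by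
    intro x hx
    have := (abs_le.1 (hTay' x hx)).1
    linarith
  have hQnn : ∀ x : E, 0 ≤ x ⬝ᵥ H *ᵥ x := by
    intro x
    have := hmQ x
    nlinarith [sq_nonneg ‖x‖]
  -- gradient continuity
  have hgradcont : Continuous (gradient f) := by
    have h1 : Continuous (fderiv ℝ f) := hf.continuous_fderiv (by simp)
    exact ((InnerProductSpace.toDual ℝ (EuclideanSpace ℝ (Fin n))).symm.continuous).comp h1
  have hGcont : Continuous (fun x : E => Real.sqrt (1 + ‖gradient f x‖ ^ 2)) := by
    exact Real.continuous_sqrt.comp (continuous_const.add ((hgradcont.norm).pow 2))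
  have hgrad0 : gradient f 0 = 0 := by
    show (InnerProductSpace.toDual ℝ (EuclideanSpace ℝ (Fin n))).symm (fderiv ℝ f 0) = 0
    rw [hgrad, map_zero]
  have hG0 : Real.sqrt (1 + ‖gradient f 0‖ ^ 2) = 1 := by
    rw [hgrad0]; simp
  have hGev : ∀ᶠ x in 𝓝 (0:E), Real.sqrt (1 + ‖gradient f x‖ ^ 2) < 1 + ε := by
    have h1 : Filter.Tendsto (fun x : E => Real.sqrt (1 + ‖gradient f x‖ ^ 2)) (𝓝 0)
        (𝓝 1) := by
      have := hGcont.tendsto 0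
      rwa [hG0] at this
    exact h1.eventually_lt_const (by linarith)
  obtain ⟨δ₂, hδ₂, hGball⟩ := Metric.eventually_nhds_iff_ball.1 hGev
  set δ := min δ₁ δ₂ with hδdef
  have hδ : 0 < δ := lt_min hδ₁ hδ₂
  set ρ := δ/2 with hρdef
  have hρ : 0 < ρ := by positivity
  have hρδ : ρ < δ := by rw [hρdef]; linarith
  set t₀ := (1-ε) * (m/2) * ρ^2 with ht₀def
  have ht₀ : 0 < t₀ := by positivity
  have hIoo : Set.Ioo (0:ℝ) t₀ ∈ 𝓝[>] (0:ℝ) := Ioo_mem_nhdsGT_of_mem ⟨le_refl 0, ht₀⟩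
  filter_upwards [hIoo] with t ht
  obtain ⟨ht0, htt₀⟩ := ht
  -- containment of sublevel set
  have hcont : {x : E | f x < t} ⊆ Metric.ball (0:E) ρ := by
    intro x hx
    simp only [Set.mem_setOf_eq] at hx
    by_contra hxρ
    rw [Metric.mem_ball, dist_zero_right] at hxρ
    push_neg at hxρ
    have hxpos : (0:ℝ) < ‖x‖ := lt_of_lt_of_le hρ hxρ
    set a := ρ / ‖x‖ with hadef
    have ha0 : 0 < a := div_pos hρ hxpos
    have ha1 : a ≤ 1 := by
      rw [hadef, div_le_one hxpos]; exact hxρ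
    have hynorm : ‖a • x‖ = ρ := by
      rw [norm_smul, Real.norm_eq_abs, abs_of_pos ha0, hadef, div_mul_cancel₀ _ hxpos.ne']
    have hcvx : f (a • x) ≤ a * f x := by
      have := hconv.2 (Set.mem_univ x) (Set.mem_univ (0:E)) ha0.le
        (by linarith : 0 ≤ 1 - a) (by ring)
      simpa [hf0, smul_zero] using this
    have hylow : t₀ ≤ f (a • x) := by
      have h1 : ‖a • x‖ < δ₁ := by rw [hynorm]; exact lt_of_lt_of_le hρδ (min_le_left _ _)
      have h2 := hlow (a • x) h1
      have h3 : m * ρ^2 ≤ (a • x).ofLp ⬝ᵥ H *ᵥ (a • x).ofLp := by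
        have := hmQ (a • x)
        rwa [hynorm] at this
      rw [ht₀def]
      nlinarith
    have hafx : a * f x < t₀ := by
      rcases le_or_gt 0 (f x) with h | h
      · have : a * f x ≤ f x := by nlinarith
        linarith
      · nlinarith
    linarith
  have hSmeas : MeasurableSet {x : E | f x < t} :=
    (isOpen_lt hf.continuous continuous_const).measurableSet
  have hSδ : {x : E | f x < t} ⊆ Metric.ball (0:E) δ :=
    hcont.trans (Metric.ball_subset_ball hρδ.le)
  have hfin' : volume {x : E | f x < t} ≠ ⊤ :=
    ((measure_mono hSδ).trans_lt measure_ball_lt_top).ne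
  have hs₁ : (0:ℝ) < 2*t/(1+ε) := by positivity
  have hs₂ : (0:ℝ) < 2*t/(1-ε) := by positivity
  -- inclusions
  have hinc1 : {x : E | x ⬝ᵥ H *ᵥ x < 2*t/(1+ε)} ⊆ {x : E | f x < t} := by
    intro x hx
    simp only [Set.mem_setOf_eq] at hx ⊢
    have hxρ' : ‖x‖ < ρ := by
      have h1 : m * ‖x‖^2 ≤ x ⬝ᵥ H *ᵥ x := hmQ x
      have h2 : 2*t/(1+ε) ≤ 2*t := by
        rw [div_le_iff₀ h1ε']; nlinarith
      have h3 : 2*t < 2*t₀ := by linarith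
      have h4 : 2*t₀ ≤ m * ρ^2 := by rw [ht₀def]; nlinarith
      have h5 : ‖x‖^2 < ρ^2 := by nlinarith
      exact lt_of_pow_lt_pow_left₀ 2 hρ.le h5
    have hxδ : ‖x‖ < δ₁ := lt_of_lt_of_le (lt_trans hxρ' hρδ) (min_le_left _ _)
    have h6 := hupp x hxδ
    have h7 : (1+ε) * ((1/2) * (x ⬝ᵥ H *ᵥ x)) < t := by
      have h8 := (lt_div_iff₀ h1ε').1 hx
      nlinarith
    linarith
  have hinc2 : {x : E | f x < t} ⊆ {x : E | x ⬝ᵥ H *ᵥ x < 2*t/(1-ε)} := by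
    intro x hx
    have hxρ' : ‖x‖ < ρ := by
      have := hcont hx
      rwa [Metric.mem_ball, dist_zero_right] at this
    simp only [Set.mem_setOf_eq] at hx ⊢
    have hxδ : ‖x‖ < δ₁ := lt_of_lt_of_le (lt_trans hxρ' hρδ) (min_le_left _ _)
    have h6 := hlow x hxδ
    rw [lt_div_iff₀ h1ε]
    nlinarith
  -- volume computations
  have hv₁ := ellipsoid_volume hn hhess hs₁
  have hv₂ := ellipsoid_volume hn hhess hs₂
  have hvol_low : Real.sqrt (2*t/(1+ε)) ^ n / Real.sqrt H.det * ωn.toReal ≤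
      (volume {x : E | f x < t}).toReal := by
    have h1 := ENNReal.toReal_mono hfin' (measure_mono hinc1)
    rwa [hv₁, ENNReal.toReal_mul, ENNReal.toReal_ofReal (by positivity)] at h1
  have hv₂fin : volume {x : E | x ⬝ᵥ H *ᵥ x < 2*t/(1-ε)} ≠ ⊤ := by
    rw [hv₂]
    exact ENNReal.mul_ne_top ENNReal.ofReal_ne_top hωfin
  have hvol_upp : (volume {x : E | f x < t}).toReal ≤
      Real.sqrt (2*t/(1-ε)) ^ n / Real.sqrt H.det * ωn.toReal := by
    have h1 := ENNReal.toReal_mono hv₂fin (measure_mono hinc2)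
    rwa [hv₂, ENNReal.toReal_mul, ENNReal.toReal_ofReal (by positivity)] at h1
  -- integral bounds
  have hGle : ∀ x ∈ {x : E | f x < t}, Real.sqrt (1 + ‖gradient f x‖ ^ 2) ≤ 1 + ε := by
    intro x hx
    have hxδ₂ : x ∈ Metric.ball (0:E) δ₂ :=
      Metric.ball_subset_ball (min_le_right δ₁ δ₂) (hSδ hx)
    exact (hGball x hxδ₂).le
  have hG1 : ∀ x : E, 1 ≤ Real.sqrt (1 + ‖gradient f x‖ ^ 2) := by
    intro x
    have h1 := Real.sqrt_le_sqrt (show (1:ℝ) ≤ 1 + ‖gradient f x‖ ^ 2 by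
      nlinarith [sq_nonneg ‖gradient f x‖])
    rwa [Real.sqrt_one] at h1
  have hGint : IntegrableOn (fun x : E => Real.sqrt (1 + ‖gradient f x‖ ^ 2))
      {x : E | f x < t} volume := by
    refine Measure.integrableOn_of_bounded hfin' hGcont.aestronglyMeasurable (M := 1+ε) ?_
    refine (ae_restrict_iff' hSmeas).2 (ae_of_all _ fun x hx => ?_)
    rw [Real.norm_eq_abs, abs_of_nonneg (Real.sqrt_nonneg _)]
    exact hGle x hx
  have hconst1 : IntegrableOn (fun _ : E => (1:ℝ)) {x : E | f x < t} volume :=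
    integrableOn_const hfin'
  have hconst2 : IntegrableOn (fun _ : E => (1:ℝ)+ε) {x : E | f x < t} volume :=
    integrableOn_const hfin'
  have hint_low : (volume {x : E | f x < t}).toReal ≤
      ∫ x in {x : E | f x < t}, Real.sqrt (1 + ‖gradient f x‖ ^ 2) := by
    have h1 := setIntegral_mono_on hconst1 hGint hSmeas (fun x _ => hG1 x)
    rwa [setIntegral_const, smul_eq_mul, mul_one] at h1
  have hint_upp : (∫ x in {x : E | f x < t}, Real.sqrt (1 + ‖gradient f x‖ ^ 2)) ≤
      (1+ε) * (volume {x : E | f x < t}).toReal := by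
    have h1 := setIntegral_mono_on hGint hconst2 hSmeas (fun x hx => hGle x hx)
    rwa [setIntegral_const, smul_eq_mul, mul_comm] at h1
  -- rpow arithmetic
  have htpow : 0 < t ^ (-(n:ℝ)/2) := Real.rpow_pos_of_pos ht0 _
  have hcalc1 : t ^ (-(n:ℝ)/2) * (Real.sqrt (2*t/(1+ε)) ^ n / Real.sqrt H.det * ωn.toReal) =
      ((1+ε)⁻¹) ^ ((n:ℝ)/2) * C := by
    have h1 := rpow_calc n ht0 h1ε'
    calc t ^ (-(n:ℝ)/2) * (Real.sqrt (2*t/(1+ε)) ^ n / Real.sqrt H.det * ωn.toReal)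
        = (t ^ (-(n:ℝ)/2) * Real.sqrt (2*t/(1+ε)) ^ n) * (ωn.toReal / Real.sqrt H.det) := by
          ring
      _ = (Real.sqrt 2 ^ n * ((1+ε)⁻¹) ^ ((n:ℝ)/2)) * (ωn.toReal / Real.sqrt H.det) := by
          rw [h1]
      _ = ((1+ε)⁻¹) ^ ((n:ℝ)/2) * C := by rw [hCdef]; ring
  have hcalc2 : t ^ (-(n:ℝ)/2) * (Real.sqrt (2*t/(1-ε)) ^ n / Real.sqrt H.det * ωn.toReal) =
      ((1-ε)⁻¹) ^ ((n:ℝ)/2) * C := by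
    have h1 := rpow_calc n ht0 h1ε
    calc t ^ (-(n:ℝ)/2) * (Real.sqrt (2*t/(1-ε)) ^ n / Real.sqrt H.det * ωn.toReal)
        = (t ^ (-(n:ℝ)/2) * Real.sqrt (2*t/(1-ε)) ^ n) * (ωn.toReal / Real.sqrt H.det) := by
          ring
      _ = (Real.sqrt 2 ^ n * ((1-ε)⁻¹) ^ ((n:ℝ)/2)) * (ωn.toReal / Real.sqrt H.det) := by
          rw [h1]
      _ = ((1-ε)⁻¹) ^ ((n:ℝ)/2) * C := by rw [hCdef]; ring
  constructor
  · calc ((1+ε)⁻¹) ^ ((n:ℝ)/2) * C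
        = t ^ (-(n:ℝ)/2) * (Real.sqrt (2*t/(1+ε)) ^ n / Real.sqrt H.det * ωn.toReal) :=
          hcalc1.symm
      _ ≤ t ^ (-(n:ℝ)/2) * (volume {x : E | f x < t}).toReal :=
          mul_le_mul_of_nonneg_left hvol_low htpow.le
      _ ≤ t ^ (-(n:ℝ)/2) * ∫ x in {x : E | f x < t}, Real.sqrt (1 + ‖gradient f x‖ ^ 2) :=
          mul_le_mul_of_nonneg_left hint_low htpow.le
  · calc t ^ (-(n:ℝ)/2) * ∫ x in {x : E | f x < t}, Real.sqrt (1 + ‖gradient f x‖ ^ 2)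
        ≤ t ^ (-(n:ℝ)/2) * ((1+ε) * (volume {x : E | f x < t}).toReal) :=
          mul_le_mul_of_nonneg_left hint_upp htpow.le
      _ ≤ t ^ (-(n:ℝ)/2) * ((1+ε) * (Real.sqrt (2*t/(1-ε)) ^ n / Real.sqrt H.det * ωn.toReal)) := by
          refine mul_le_mul_of_nonneg_left ?_ htpow.le
          exact mul_le_mul_of_nonneg_left hvol_upp h1ε'.le
      _ = (1+ε) * (((1-ε)⁻¹) ^ ((n:ℝ)/2) * C) := by
          rw [← hcalc2]; ring

end SAL

theorem surface_area_limit (n : ℕ) (hn : 1 ≤ n) (f : EuclideanSpace ℝ (Fin n) → ℝ)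
    (hf : ContDiff ℝ (⊤ : ℕ∞) f) (hconv : ConvexOn ℝ Set.univ f)
    (hf0 : f 0 = 0) (hgrad : gradient f 0 = 0)
    (hhess : (hessianMatrix f 0).PosDef) :
    Tendsto (fun t : ℝ => t ^ (-(n : ℝ) / 2) *
        ∫ x in {x | f x < t}, Real.sqrt (1 + ‖gradient f x‖ ^ 2))
      (𝓝[>] 0)
      (𝓝 (Real.sqrt 2 ^ n *
        (volume (Metric.ball (0 : EuclideanSpace ℝ (Fin n)) 1)).toReal /
        Real.sqrt (hessianMatrix f 0).det)) := by
  have hfderiv0 : fderiv ℝ f 0 = 0 := by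
    have h : (InnerProductSpace.toDual ℝ (EuclideanSpace ℝ (Fin n))).symm (fderiv ℝ f 0) = 0 :=
      hgrad
    have h2 := congrArg (InnerProductSpace.toDual ℝ (EuclideanSpace ℝ (Fin n))) h
    rwa [LinearIsometryEquiv.apply_symm_apply, map_zero] at h2
  set C : ℝ := Real.sqrt 2 ^ n *
      (volume (Metric.ball (0 : EuclideanSpace ℝ (Fin n)) 1)).toReal /
      Real.sqrt (hessianMatrix f 0).det with hCdef
  have hA : Tendsto (fun e : ℝ => ((1+e)⁻¹) ^ ((n:ℝ)/2) * C) (𝓝[>] 0) (𝓝 C) := by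
    have h1 : Tendsto (fun e : ℝ => (1+e)⁻¹) (𝓝 (0:ℝ)) (𝓝 1) := by
      have hc : ContinuousAt (fun e : ℝ => (1+e)⁻¹) 0 :=
        ((continuous_const.add continuous_id).continuousAt).inv₀ (by norm_num)
      have := hc.tendsto
      norm_num at this
      exact this
    have h2 : ContinuousAt (fun x : ℝ => x ^ ((n:ℝ)/2)) 1 :=
      Real.continuousAt_rpow_const 1 _ (Or.inl one_ne_zero)
    have h3 := h2.tendsto.comp h1
    rw [Real.one_rpow] at h3
    have h4 := h3.mul_const C
    rw [one_mul] at h4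
    exact h4.mono_left nhdsWithin_le_nhds
  have hB : Tendsto (fun e : ℝ => (1+e) * (((1-e)⁻¹) ^ ((n:ℝ)/2) * C)) (𝓝[>] 0) (𝓝 C) := by
    have h0 : Tendsto (fun e : ℝ => 1+e) (𝓝 (0:ℝ)) (𝓝 1) := by
      have h := (continuous_const.add continuous_id :
        Continuous fun e : ℝ => 1 + e).tendsto 0
      norm_num at h
      exact h
    have h1 : Tendsto (fun e : ℝ => (1-e)⁻¹) (𝓝 (0:ℝ)) (𝓝 1) := by
      have hc : ContinuousAt (fun e : ℝ => (1-e)⁻¹) 0 :=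
        ((continuous_const.sub continuous_id).continuousAt).inv₀ (by norm_num)
      have := hc.tendsto
      norm_num at this
      exact this
    have h2 : ContinuousAt (fun x : ℝ => x ^ ((n:ℝ)/2)) 1 :=
      Real.continuousAt_rpow_const 1 _ (Or.inl one_ne_zero)
    have h3 := h2.tendsto.comp h1
    rw [Real.one_rpow] at h3
    have h4 := h0.mul ((h3.mul_const C))
    rw [one_mul, one_mul] at h4
    exact h4.mono_left nhdsWithin_le_nhds
  have hmemIoo : ∀ᶠ e in 𝓝[>] (0:ℝ), e ∈ Set.Ioo (0:ℝ) 1 :=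
    Filter.eventually_mem_set.2 (Ioo_mem_nhdsGT_of_mem ⟨le_refl 0, one_pos⟩)
  refine tendsto_order.2 ⟨?_, ?_⟩
  · intro a ha
    have h5 : ∀ᶠ e in 𝓝[>] (0:ℝ), a < ((1+e)⁻¹) ^ ((n:ℝ)/2) * C :=
      hA.eventually (eventually_gt_nhds ha)
    obtain ⟨e, he1, he2⟩ := (h5.and hmemIoo).exists
    have hk := SAL.keybound hn f hf hconv hf0 hfderiv0 hhess he2.1 he2.2
    filter_upwards [hk] with t htk
    exact lt_of_lt_of_le he1 htk.1
  · intro b hb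
    have h5 : ∀ᶠ e in 𝓝[>] (0:ℝ), (1+e) * (((1-e)⁻¹) ^ ((n:ℝ)/2) * C) < b :=
      hB.eventually (eventually_lt_nhds hb)
    obtain ⟨e, he1, he2⟩ := (h5.and hmemIoo).exists
    have hk := SAL.keybound hn f hf hconv hf0 hfderiv0 hhess he2.1 he2.2
    filter_upwards [hk] with t htk
    exact lt_of_le_of_lt htk.2 he1
end

section
/- Let n ≥ 1 and let f : ℝⁿ → ℝ be a smooth convex function with f(0) = 0, ∇f(0) = 0, and positive definite Hessian D²f(0). Then lim_{t → 0⁺} t^{-n/2} · ∫_{{x : f(x) < t}} (√(1 + ‖∇f(x)‖²) − 1) dx = 0. -/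
open MeasureTheory Filter
open scoped RealInnerProductSpace Topology

section aux
variable {n : ℕ} {f : EuclideanSpace ℝ (Fin n) → ℝ}

local notation "E" => EuclideanSpace ℝ (Fin n)

lemma sqrt_one_add_le (u : ℝ) (hu : 0 ≤ u) : Real.sqrt (1 + u) - 1 ≤ u / 2 := by
  have h : (1 + u) ≤ (1 + u / 2) ^ 2 := by nlinarith
  have := Real.sqrt_le_sqrt h
  rw [Real.sqrt_sq (by linarith)] at this
  linarith

lemma one_le_sqrt_one_add (u : ℝ) (hu : 0 ≤ u) : 1 ≤ Real.sqrt (1 + u) := by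
  have := Real.sqrt_le_sqrt (show (1:ℝ) ≤ 1 + u by linarith)
  simpa using this

lemma inner_gradient_eq (f : E → ℝ) (y v : E) : ⟪gradient f y, v⟫ = fderiv ℝ f y v := by
  rw [gradient]; exact InnerProductSpace.toDual_symm_apply

lemma inner_fderiv_gradient (hf : ContDiff ℝ (⊤ : ℕ∞) f) (v w : E) :
    ⟪fderiv ℝ (gradient f) 0 v, w⟫ = fderiv ℝ (fderiv ℝ f) 0 v w := by
  have hg : ContDiff ℝ (⊤ : ℕ∞) (gradient f) := by
    have h1 : ContDiff ℝ (⊤ : ℕ∞) (fderiv ℝ f) := hf.fderiv_right (by simp)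
    exact ((InnerProductSpace.toDual ℝ E).symm.contDiff).comp h1
  have hGdiff : DifferentiableAt ℝ (gradient f) 0 :=
    (hg.differentiable (by simp)).differentiableAt
  have hD : ContDiff ℝ (⊤ : ℕ∞) (fderiv ℝ f) := hf.fderiv_right (by simp)
  have hDdiff : DifferentiableAt ℝ (fderiv ℝ f) 0 :=
    (hD.differentiable (by simp)).differentiableAt
  set A : E →L[ℝ] ℝ := innerSL ℝ w
  set B : (E →L[ℝ] ℝ) →L[ℝ] ℝ := ContinuousLinearMap.apply ℝ ℝ w
  have h1 : HasFDerivAt (fun y => A (gradient f y))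
      (A.comp (fderiv ℝ (gradient f) 0)) 0 :=
    A.hasFDerivAt.comp 0 hGdiff.hasFDerivAt
  have h2 : HasFDerivAt (fun y => B (fderiv ℝ f y))
      (B.comp (fderiv ℝ (fderiv ℝ f) 0)) 0 :=
    B.hasFDerivAt.comp 0 hDdiff.hasFDerivAt
  have heq : (fun y => A (gradient f y)) = fun y => B (fderiv ℝ f y) := by
    funext y
    simp only [A, B, innerSL_apply_apply, ContinuousLinearMap.apply_apply]
    rw [real_inner_comm]
    exact inner_gradient_eq f y w
  rw [heq] at h1
  have := h1.unique h2
  have hv := congrFun (congrArg (fun (L : E →L[ℝ] ℝ) => (L : E → ℝ)) this) v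
  simp only [ContinuousLinearMap.coe_comp', Function.comp_apply, A, B,
    innerSL_apply_apply, ContinuousLinearMap.apply_apply] at hv
  rw [real_inner_comm]
  exact hv

lemma hessian_entry (hf : ContDiff ℝ (⊤ : ℕ∞) f) (i j : Fin n) :
    hessianMatrix f 0 i j
      = ⟪fderiv ℝ (gradient f) 0 (EuclideanSpace.single i 1), EuclideanSpace.single j 1⟫ := by
  rw [inner_fderiv_gradient hf, hessianMatrix]
  simp [iteratedFDeriv_two_apply]

lemma quad_pos_s4 (hf : ContDiff ℝ (⊤ : ℕ∞) f) (hhess : (hessianMatrix f 0).PosDef)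
    (v : E) (hv : v ≠ 0) : 0 < ⟪fderiv ℝ (gradient f) 0 v, v⟫ := by
  set H := fderiv ℝ (gradient f) 0
  have hvsum : v = ∑ i, v i • (EuclideanSpace.single i (1:ℝ)) := by
    simpa using ((EuclideanSpace.basisFun (Fin n) ℝ).toBasis.sum_repr v).symm
  have hexp : ⟪H v, v⟫ = ∑ i, ∑ j, v i * (v j * (hessianMatrix f 0 i j)) := by
    conv_lhs => rw [hvsum, map_sum, sum_inner]
    refine Finset.sum_congr rfl fun i _ => ?_
    rw [_root_.map_smul, real_inner_smul_left, inner_sum, Finset.mul_sum]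
    refine Finset.sum_congr rfl fun j _ => ?_
    rw [real_inner_smul_right, hessian_entry hf]
  have hdot : (0:ℝ) < dotProduct (fun i => v i) (Matrix.mulVec (hessianMatrix f 0) (fun i => v i)) := by
    have h := hhess.dotProduct_mulVec_pos (x := fun i => v i)
    rw [star_trivial] at h
    apply h
    intro h0
    apply hv
    ext i
    exact congrFun h0 i
  rw [hexp]
  convert hdot using 1
  simp only [dotProduct, Matrix.mulVec, Finset.mul_sum]
  refine Finset.sum_congr rfl fun i _ => Finset.sum_congr rfl fun j _ => by ring


lemma exists_coercive (hn : 1 ≤ n) (hf : ContDiff ℝ (⊤ : ℕ∞) f)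
    (hhess : (hessianMatrix f 0).PosDef) :
    ∃ c > 0, ∀ x : E, c * ‖x‖ ^ 2 ≤ ⟪fderiv ℝ (gradient f) 0 x, x⟫ := by
  set H := fderiv ℝ (gradient f) 0 with hH
  have hQcont : Continuous fun v : E => ⟪H v, v⟫ := H.continuous.inner continuous_id
  have hne : (Metric.sphere (0:E) 1).Nonempty := by
    refine ⟨EuclideanSpace.single ⟨0, hn⟩ 1, ?_⟩
    simp [mem_sphere_zero_iff_norm]
  obtain ⟨v₀, hv₀mem, hmin'⟩ :=
    (isCompact_sphere (0:E) 1).exists_isMinOn hne hQcont.continuousOn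
  have hmin : ∀ u ∈ Metric.sphere (0:E) 1, ⟪H v₀, v₀⟫ ≤ ⟪H u, u⟫ := fun u hu => hmin' hu
  have hv₀norm : ‖v₀‖ = 1 := mem_sphere_zero_iff_norm.mp hv₀mem
  have hv₀ne : v₀ ≠ 0 := by
    intro h; rw [h] at hv₀norm; simp at hv₀norm
  refine ⟨⟪H v₀, v₀⟫, quad_pos_s4 hf hhess v₀ hv₀ne, fun x => ?_⟩
  rcases eq_or_ne x 0 with rfl | hx
  · simp
  · have hxn : (0:ℝ) < ‖x‖ := norm_pos_iff.mpr hx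
    have hu : (‖x‖⁻¹ • x) ∈ Metric.sphere (0:E) 1 := by
      simp [mem_sphere_zero_iff_norm, norm_smul, abs_of_pos (inv_pos.mpr hxn),
        inv_mul_cancel₀ hxn.ne']
    have h1 := hmin _ hu
    have h2 : ⟪H (‖x‖⁻¹ • x), ‖x‖⁻¹ • x⟫ = ‖x‖⁻¹ * (‖x‖⁻¹ * ⟪H x, x⟫) := by
      rw [_root_.map_smul, real_inner_smul_left, real_inner_smul_right]
    rw [h2] at h1
    have hx2 : (0:ℝ) < ‖x‖ ^ 2 := by positivity
    set I : ℝ := ⟪H x, x⟫ with hI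
    calc ⟪H v₀, v₀⟫ * ‖x‖ ^ 2 ≤ (‖x‖⁻¹ * (‖x‖⁻¹ * I)) * ‖x‖ ^ 2 := by nlinarith
      _ = I := by field_simp

end aux

set_option maxHeartbeats 2000000 in
theorem surface_minus_area_limit_zero (n : ℕ) (hn : 1 ≤ n)
    (f : EuclideanSpace ℝ (Fin n) → ℝ)
    (hf : ContDiff ℝ (⊤ : ℕ∞) f) (hconv : ConvexOn ℝ Set.univ f)
    (hf0 : f 0 = 0) (hgrad : gradient f 0 = 0)
    (hhess : (hessianMatrix f 0).PosDef) :
    Tendsto (fun t : ℝ => t ^ (-(n : ℝ) / 2) *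
        ∫ x in {x | f x < t}, (Real.sqrt (1 + ‖gradient f x‖ ^ 2) - 1))
      (𝓝[>] 0) (𝓝 0) := by
  classical
  have hgradC : ContDiff ℝ (⊤ : ℕ∞) (gradient f) := by
    have h1 : ContDiff ℝ (⊤ : ℕ∞) (fderiv ℝ f) := hf.fderiv_right (by simp)
    exact ((InnerProductSpace.toDual ℝ (EuclideanSpace ℝ (Fin n))).symm.contDiff).comp h1
  have hgradcont : Continuous (gradient f) := hgradC.continuous
  set H := fderiv ℝ (gradient f) 0 with hH
  obtain ⟨c, hc, hcoer⟩ := exists_coercive hn hf hhess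
  -- little-o bound on gradient minus its linearization
  obtain ⟨r₁, hr₁, hball⟩ : ∃ r₁ > 0, ∀ y : EuclideanSpace ℝ (Fin n), ‖y‖ < r₁ →
      ‖gradient f y - H y‖ ≤ c / 2 * ‖y‖ := by
    have hder : HasFDerivAt (gradient f) H 0 :=
      ((hgradC.differentiable (by simp)) 0).hasFDerivAt
    have h := hder.isLittleO.def (by positivity : (0:ℝ) < c / 2)
    rw [Metric.eventually_nhds_iff] at h
    obtain ⟨ε, hε, hh⟩ := h
    refine ⟨ε, hε, fun y hy => ?_⟩
    have := hh (show dist y 0 < ε by simpa [dist_zero_right] using hy)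
    simpa [hgrad] using this
  -- lower bound for f near 0
  have hflow : ∀ x : EuclideanSpace ℝ (Fin n), ‖x‖ < r₁ → c / 4 * ‖x‖ ^ 2 ≤ f x := by
    intro x hx
    have hdiff := hf.differentiable (by simp)
    have hderiv : ∀ s : ℝ, HasDerivAt (fun s : ℝ => f (s • x)) ⟪gradient f (s • x), x⟫ s := by
      intro s
      have h1 : HasFDerivAt f (fderiv ℝ f (s • x)) (s • x) := (hdiff _).hasFDerivAt
      have h2 : HasDerivAt (fun s : ℝ => s • x) x s := by
        simpa using (hasDerivAt_id s).smul_const x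
      have h3 := h1.comp_hasDerivAt s h2
      rw [inner_gradient_eq]
      exact h3
    have hcont : Continuous fun s : ℝ => ⟪gradient f (s • x), x⟫ :=
      (hgradcont.comp (continuous_id.smul continuous_const)).inner continuous_const
    have hFTC : (∫ s in (0:ℝ)..1, ⟪gradient f (s • x), x⟫) = f x := by
      have h := intervalIntegral.integral_eq_sub_of_hasDerivAt
        (fun s _ => hderiv s) (hcont.intervalIntegrable 0 1)
      simpa [hf0] using h
    have hlow : ∀ s ∈ Set.Icc (0:ℝ) 1, c / 2 * ‖x‖ ^ 2 * s ≤ ⟪gradient f (s • x), x⟫ := by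
      intro s hs
      have hs0 : 0 ≤ s := hs.1
      have hsx : ‖s • x‖ = s * ‖x‖ := by
        rw [norm_smul, Real.norm_eq_abs, abs_of_nonneg hs0]
      have hsxr : ‖s • x‖ < r₁ := by
        rw [hsx]
        calc s * ‖x‖ ≤ 1 * ‖x‖ := by
              have := norm_nonneg x; nlinarith [hs.2]
          _ = ‖x‖ := one_mul _
          _ < r₁ := hx
      have h1 : ⟪H (s • x), x⟫ = s * ⟪H x, x⟫ := by
        rw [_root_.map_smul, real_inner_smul_left]
      have h2 : |⟪gradient f (s • x) - H (s • x), x⟫| ≤ c / 2 * (s * ‖x‖) * ‖x‖ := by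
        calc |⟪gradient f (s • x) - H (s • x), x⟫|
            ≤ ‖gradient f (s • x) - H (s • x)‖ * ‖x‖ := abs_real_inner_le_norm _ _
          _ ≤ c / 2 * ‖s • x‖ * ‖x‖ := by
              have := hball _ hsxr
              have := norm_nonneg x; nlinarith
          _ = c / 2 * (s * ‖x‖) * ‖x‖ := by rw [hsx]
      have h3 : ⟪gradient f (s • x), x⟫
          = ⟪H (s • x), x⟫ + ⟪gradient f (s • x) - H (s • x), x⟫ := by
        rw [inner_sub_left]; ring
      have h4 : c * ‖x‖ ^ 2 ≤ ⟪H x, x⟫ := hcoer x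
      have h5 := abs_le.mp h2
      rw [h3, h1]
      nlinarith [h5.1]
    have hint1 : IntervalIntegrable (fun s : ℝ => c / 2 * ‖x‖ ^ 2 * s) volume 0 1 :=
      (Continuous.intervalIntegrable (by continuity) 0 1)
    have hmono := intervalIntegral.integral_mono_on (by norm_num : (0:ℝ) ≤ 1) hint1
      (hcont.intervalIntegrable 0 1) hlow
    have hval : (∫ s in (0:ℝ)..1, c / 2 * ‖x‖ ^ 2 * s) = c / 4 * ‖x‖ ^ 2 := by
      rw [intervalIntegral.integral_const_mul, integral_id]
      ring
    rw [hval, hFTC] at hmono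
    exact hmono
  -- gradient upper bound
  set L : ℝ := ‖H‖ + c / 2 with hL
  have hL0 : 0 ≤ L := by positivity
  have hgub : ∀ x : EuclideanSpace ℝ (Fin n), ‖x‖ < r₁ → ‖gradient f x‖ ≤ L * ‖x‖ := by
    intro x hx
    have h1 := hball x hx
    have h2 : ‖H x‖ ≤ ‖H‖ * ‖x‖ := H.le_opNorm x
    calc ‖gradient f x‖ = ‖H x + (gradient f x - H x)‖ := by
          congr 1
          abel
      _ ≤ ‖H x‖ + ‖gradient f x - H x‖ := norm_add_le _ _
      _ ≤ ‖H‖ * ‖x‖ + c / 2 * ‖x‖ := add_le_add h2 h1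
      _ = L * ‖x‖ := by ring
  set r₀ : ℝ := r₁ / 2 with hr₀def
  have hr₀ : 0 < r₀ := by positivity
  set t₀ : ℝ := c / 4 * r₀ ^ 2 with ht₀def
  have ht₀ : 0 < t₀ := by positivity
  -- sublevel sets are small
  have hsmall : ∀ t, 0 < t → t ≤ t₀ → ∀ x : EuclideanSpace ℝ (Fin n), f x < t → ‖x‖ < r₀ := by
    intro t ht htt₀ x hfx
    by_contra hcon
    push_neg at hcon
    have hxn : 0 < ‖x‖ := lt_of_lt_of_le hr₀ hcon
    set θ : ℝ := r₀ / ‖x‖ with hθdef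
    have hθ0 : 0 < θ := by positivity
    have hθ1 : θ ≤ 1 := by
      rw [hθdef, div_le_one hxn]; exact hcon
    have hy : ‖θ • x‖ = r₀ := by
      rw [norm_smul, Real.norm_eq_abs, abs_of_pos hθ0, hθdef]
      field_simp
    have hyr : ‖θ • x‖ < r₁ := by rw [hy, hr₀def]; linarith
    have hfy : c / 4 * r₀ ^ 2 ≤ f (θ • x) := by
      have := hflow (θ • x) hyr
      rwa [hy] at this
    have hconvle : f (θ • x) ≤ θ * f x := by
      have h := hconv.2 (Set.mem_univ x) (Set.mem_univ (0:EuclideanSpace ℝ (Fin n)))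
        (le_of_lt hθ0) (by linarith : (0:ℝ) ≤ 1 - θ) (by ring)
      simpa [hf0, smul_zero] using h
    have : f (θ • x) < t := by
      calc f (θ • x) ≤ θ * f x := hconvle
        _ < θ * t := by exact (mul_lt_mul_iff_right₀ hθ0).mpr hfx
        _ ≤ 1 * t := by nlinarith
        _ = t := one_mul t
    rw [ht₀def] at htt₀
    linarith
  -- main bound
  set B : ℝ := (volume (Metric.ball (0 : EuclideanSpace ℝ (Fin n)) 1)).toReal with hB
  set K : ℝ := 2 * L ^ 2 / c * ((4 / c) ^ ((n : ℝ) / 2) * B) with hK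
  haveI : Nontrivial (EuclideanSpace ℝ (Fin n)) := by
    refine ⟨EuclideanSpace.single ⟨0, hn⟩ 1, 0, ?_⟩
    intro h
    have := congrArg (fun v : EuclideanSpace ℝ (Fin n) => ‖v‖) h
    simp at this
  set I : ℝ → ℝ := fun t => ∫ x in {x | f x < t}, (Real.sqrt (1 + ‖gradient f x‖ ^ 2) - 1)
    with hIdef
  have hbound : ∀ t ∈ Set.Ioo (0:ℝ) t₀, ‖t ^ (-(n : ℝ) / 2) * I t‖ ≤ K * t := by
    intro t ht
    obtain ⟨ht0, htt₀⟩ := ht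
    set R : ℝ := Real.sqrt (4 * t / c) with hR
    have hR0 : 0 ≤ R := Real.sqrt_nonneg _
    have hsubset : {x : EuclideanSpace ℝ (Fin n) | f x < t} ⊆ Metric.ball 0 R := by
      intro x hx
      have hxr₀ : ‖x‖ < r₀ := hsmall t ht0 htt₀.le x hx
      have hxr₁ : ‖x‖ < r₁ := by rw [hr₀def] at hxr₀; linarith
      have h1 : c / 4 * ‖x‖ ^ 2 ≤ f x := hflow x hxr₁
      have h2 : ‖x‖ ^ 2 < 4 * t / c := by
        have hfx : f x < t := hx
        rw [lt_div_iff₀ hc]; nlinarith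
      rw [Metric.mem_ball, dist_zero_right]
      rw [hR]
      exact (Real.lt_sqrt (norm_nonneg x)).mpr h2
    have hμfin : volume {x : EuclideanSpace ℝ (Fin n) | f x < t} < ⊤ :=
      lt_of_le_of_lt (measure_mono hsubset) measure_ball_lt_top
    have hCbnd : ∀ x ∈ {x : EuclideanSpace ℝ (Fin n) | f x < t},
        ‖Real.sqrt (1 + ‖gradient f x‖ ^ 2) - 1‖ ≤ 2 * L ^ 2 / c * t := by
      intro x hx
      have hxr₀ : ‖x‖ < r₀ := hsmall t ht0 htt₀.le x hx
      have hxr₁ : ‖x‖ < r₁ := by rw [hr₀def] at hxr₀; linarith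
      have h1 : c / 4 * ‖x‖ ^ 2 ≤ f x := hflow x hxr₁
      have h2 : ‖x‖ ^ 2 < 4 * t / c := by
        have hfx : f x < t := hx
        rw [lt_div_iff₀ hc]; nlinarith
      have hg : ‖gradient f x‖ ≤ L * ‖x‖ := hgub x hxr₁
      have hu0 : (0:ℝ) ≤ ‖gradient f x‖ ^ 2 := sq_nonneg _
      have hnn : 0 ≤ Real.sqrt (1 + ‖gradient f x‖ ^ 2) - 1 := by
        have := one_le_sqrt_one_add (‖gradient f x‖ ^ 2) hu0
        linarith
      rw [Real.norm_eq_abs, abs_of_nonneg hnn]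
      have h3 : Real.sqrt (1 + ‖gradient f x‖ ^ 2) - 1 ≤ ‖gradient f x‖ ^ 2 / 2 :=
        sqrt_one_add_le _ hu0
      have h4 : ‖gradient f x‖ ^ 2 ≤ L ^ 2 * ‖x‖ ^ 2 := by nlinarith [norm_nonneg (gradient f x), norm_nonneg x]
      have h5 : L ^ 2 * ‖x‖ ^ 2 ≤ L ^ 2 * (4 * t / c) := by nlinarith [sq_nonneg L]
      have h6 : L ^ 2 * (4 * t / c) / 2 = 2 * L ^ 2 / c * t := by field_simp; ring
      have h7 : ‖gradient f x‖ ^ 2 ≤ L ^ 2 * (4 * t / c) := h4.trans h5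
      linarith
    have hmeas : AEStronglyMeasurable
        (fun x : EuclideanSpace ℝ (Fin n) => Real.sqrt (1 + ‖gradient f x‖ ^ 2) - 1)
        (volume.restrict {x | f x < t}) := by
      apply Continuous.aestronglyMeasurable
      exact (Real.continuous_sqrt.comp (by continuity)).sub continuous_const
    have hInt : ‖I t‖ ≤ 2 * L ^ 2 / c * t *
        (volume {x : EuclideanSpace ℝ (Fin n) | f x < t}).toReal :=
      norm_setIntegral_le_of_norm_le_const hμfin hCbnd
    -- volume bound
    have hvol : (volume {x : EuclideanSpace ℝ (Fin n) | f x < t}).toReal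
        ≤ R ^ n * B := by
      have h1 := measure_mono (μ := (volume : Measure (EuclideanSpace ℝ (Fin n)))) hsubset
      have h2 : volume (Metric.ball (0 : EuclideanSpace ℝ (Fin n)) R)
          = ENNReal.ofReal (R ^ n) * volume (Metric.ball (0 : EuclideanSpace ℝ (Fin n)) 1) := by
        rw [Measure.addHaar_ball volume 0 hR0]
        congr 2
        simp [finrank_euclideanSpace_fin]
      have h3 := ENNReal.toReal_mono (by
          rw [h2]
          exact ENNReal.mul_ne_top ENNReal.ofReal_ne_top measure_ball_lt_top.ne) h1
      rw [h2, ENNReal.toReal_mul, ENNReal.toReal_ofReal (by positivity)] at h3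
      exact h3
    have hRn : R ^ n = (4 / c) ^ ((n : ℝ) / 2) * t ^ ((n : ℝ) / 2) := by
      have ha : (0:ℝ) ≤ 4 * t / c := by positivity
      rw [hR, Real.sqrt_eq_rpow, ← Real.rpow_natCast ((4 * t / c) ^ ((1:ℝ)/2)) n,
        ← Real.rpow_mul ha]
      have : 4 * t / c = 4 / c * t := by ring
      rw [this, Real.mul_rpow (by positivity) ht0.le,
        show (1:ℝ)/2 * (n:ℝ) = (n:ℝ)/2 by ring]
    have htp : (0:ℝ) < t ^ (-(n : ℝ) / 2) := Real.rpow_pos_of_pos ht0 _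
    rw [norm_mul, Real.norm_eq_abs (t ^ (-(n : ℝ) / 2)), abs_of_pos htp]
    calc t ^ (-(n : ℝ) / 2) * ‖I t‖
        ≤ t ^ (-(n : ℝ) / 2) * (2 * L ^ 2 / c * t *
          (volume {x : EuclideanSpace ℝ (Fin n) | f x < t}).toReal) :=
          mul_le_mul_of_nonneg_left hInt htp.le
      _ ≤ t ^ (-(n : ℝ) / 2) * (2 * L ^ 2 / c * t * (R ^ n * B)) := by
          apply mul_le_mul_of_nonneg_left _ htp.le
          apply mul_le_mul_of_nonneg_left hvol (by positivity)
      _ = K * t := by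
          rw [hRn, hK]
          have h7 : t ^ (-(n : ℝ) / 2) * t ^ ((n : ℝ) / 2) = 1 := by
            rw [← Real.rpow_add ht0, show -(n:ℝ)/2 + (n:ℝ)/2 = 0 by ring, Real.rpow_zero]
          linear_combination (2 * L ^ 2 / c * t * ((4 / c) ^ ((n:ℝ)/2) * B)) * h7
  apply squeeze_zero_norm' (Filter.eventually_of_mem (Ioo_mem_nhdsGT ht₀) hbound)
  have : Tendsto (fun t : ℝ => K * t) (𝓝 0) (𝓝 (K * 0)) :=
    (continuous_const.mul continuous_id).tendsto 0
  simpa using this.mono_left nhdsWithin_le_nhds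
end

section
/- Let n ≥ 1, let a₁, …, a_n > 0, and let f : ℝⁿ → ℝ be given by f(x) = Σ_{i=1}^n a_i² x_i². Then for every x ∈ ℝⁿ and every k > 0, V*_x(k) = α_n · k^{(n+2)/2}, where α_n = 2 σ_{n−1} / (n (n+2) a₁ a₂ ⋯ a_n) and σ_{n−1} is the surface area of the unit (n−1)-sphere in ℝⁿ. -/
open MeasureTheory Filter
open scoped RealInnerProductSpace Topology

open Set in
lemma paraboloid_hasGradientAt (n : ℕ) (a : Fin n → ℝ) (f : EuclideanSpace ℝ (Fin n) → ℝ)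
    (hf : ∀ x, f x = ∑ i, (a i) ^ 2 * (x i) ^ 2) (x : EuclideanSpace ℝ (Fin n)) :
    HasGradientAt f (WithLp.toLp 2 (fun i => 2 * (a i)^2 * x i) : EuclideanSpace ℝ (Fin n)) x := by
  rw [hasGradientAt_iff_hasFDerivAt]
  have h1 : HasFDerivAt f
      (∑ i, (2 * (a i)^2 * x i) • (EuclideanSpace.proj i : EuclideanSpace ℝ (Fin n) →L[ℝ] ℝ)) x := by
    have hfe : f = fun y => ∑ i, (a i)^2 * (y i)^2 := funext hf
    rw [hfe]
    refine HasFDerivAt.fun_sum fun i _ => ?_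
    have hp : HasFDerivAt (fun y : EuclideanSpace ℝ (Fin n) => y i)
        (EuclideanSpace.proj i : EuclideanSpace ℝ (Fin n) →L[ℝ] ℝ) x :=
      (EuclideanSpace.proj (𝕜 := ℝ) i).hasFDerivAt
    have h2 : HasFDerivAt (fun y : EuclideanSpace ℝ (Fin n) => (a i)^2 * (y i)^2)
        (((a i)^2 : ℝ) • ((x i) • (EuclideanSpace.proj i : EuclideanSpace ℝ (Fin n) →L[ℝ] ℝ)
          + (x i) • (EuclideanSpace.proj i : EuclideanSpace ℝ (Fin n) →L[ℝ] ℝ))) x := by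
      simp only [pow_two]
      exact (hp.mul hp).const_mul _
    refine h2.congr_fderiv ?_
    ext v
    simp
    ring
  refine h1.congr_fderiv ?_
  ext v
  simp [InnerProductSpace.toDual_apply_apply, PiLp.inner_apply, RCLike.inner_apply]
  exact Finset.sum_congr rfl fun i _ => by ring

set_option maxHeartbeats 1000000 in
open Set in
theorem paraboloid_volume_formula (n : ℕ) (hn : 1 ≤ n) (a : Fin n → ℝ)
    (ha : ∀ i, 0 < a i) (f : EuclideanSpace ℝ (Fin n) → ℝ)
    (hf : ∀ x, f x = ∑ i, (a i) ^ 2 * (x i) ^ 2)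
    (x : EuclideanSpace ℝ (Fin n)) (k : ℝ) (hk : 0 < k) :
    (∫ y in {y | f y < f x + ⟪gradient f x, y - x⟫ + k},
        (f x + ⟪gradient f x, y - x⟫ + k - f y)) =
      2 * ((n : ℝ) * (volume (Metric.ball (0 : EuclideanSpace ℝ (Fin n)) 1)).toReal) /
          ((n : ℝ) * ((n : ℝ) + 2) * ∏ i, a i) *
        k ^ (((n : ℝ) + 2) / 2) := by
  classical
  have hn0 : (n : ℝ) ≠ 0 := Nat.cast_ne_zero.2 (by omega)
  have hprod : (0:ℝ) < ∏ i, a i := Finset.prod_pos fun i _ => ha i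
  have haneq : ∀ i, a i ≠ 0 := fun i => (ha i).ne'
  -- gradient and key algebraic identity
  have hgx : gradient f x = (WithLp.toLp 2 (fun i => 2 * (a i)^2 * x i) : EuclideanSpace ℝ (Fin n)) :=
    (paraboloid_hasGradientAt n a f hf x).gradient
  set Q : EuclideanSpace ℝ (Fin n) → ℝ := fun z => ∑ i, (a i)^2 * (z i)^2 with hQ
  have key : ∀ y, f x + ⟪gradient f x, y - x⟫ + k - f y = k - Q (y - x) := by
    intro y
    have hinner : ⟪gradient f x, y - x⟫ = ∑ i, 2 * (a i)^2 * x i * ((y - x) i) := by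
      rw [hgx]
      simp [PiLp.inner_apply, RCLike.inner_apply]
      exact Finset.sum_congr rfl fun i _ => by ring
    rw [hinner, hf, hf, hQ]
    have hsum : ((∑ i, (a i)^2 * (x i)^2) + ∑ i, 2 * (a i)^2 * x i * ((y - x) i))
        + ∑ i, (a i)^2 * ((y - x) i)^2 = ∑ i, (a i)^2 * (y i)^2 := by
      rw [← Finset.sum_add_distrib, ← Finset.sum_add_distrib]
      refine Finset.sum_congr rfl fun i _ => ?_
      have : (y - x) i = y i - x i := rfl
      rw [this]; ring
    linarith [hsum]
  -- measurability of the set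
  have hQcont : Continuous Q := by
    refine continuous_finset_sum _ fun i _ => Continuous.mul continuous_const ?_
    have : Continuous fun z : EuclideanSpace ℝ (Fin n) => z i :=
      (EuclideanSpace.proj (𝕜 := ℝ) i).continuous
    exact this.pow 2
  have hQx : Continuous fun y : EuclideanSpace ℝ (Fin n) => Q (y - x) :=
    hQcont.comp (continuous_id.sub continuous_const)
  have hSeq : {y | f y < f x + ⟪gradient f x, y - x⟫ + k}
      = (fun y : EuclideanSpace ℝ (Fin n) => Q (y - x)) ⁻¹' Iio k := by
    ext y
    simp only [mem_setOf_eq, mem_preimage, mem_Iio]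
    have := key y
    constructor <;> intro h <;> linarith
  have hSmeas : MeasurableSet ((fun y : EuclideanSpace ℝ (Fin n) => Q (y - x)) ⁻¹' Iio k) :=
    (isOpen_Iio.preimage hQx).measurableSet
  -- the scaling linear equivalence
  set T : EuclideanSpace ℝ (Fin n) ≃ₗ[ℝ] EuclideanSpace ℝ (Fin n) :=
    (WithLp.linearEquiv 2 ℝ (Fin n → ℝ)) ≪≫ₗ
      (LinearEquiv.piCongrRight fun i => LinearEquiv.smulOfNeZero ℝ ℝ (a i) (haneq i)) ≪≫ₗ
      (WithLp.linearEquiv 2 ℝ (Fin n → ℝ)).symm with hT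
  have hTapp : ∀ (z : EuclideanSpace ℝ (Fin n)) (i : Fin n), (T z) i = a i * z i := fun z i => rfl
  have hdet : LinearMap.det ((T : EuclideanSpace ℝ (Fin n) →ₗ[ℝ] EuclideanSpace ℝ (Fin n)))
      = ∏ i, a i := by
    have h1 : ((T : EuclideanSpace ℝ (Fin n) →ₗ[ℝ] EuclideanSpace ℝ (Fin n))) =
        ((WithLp.linearEquiv 2 ℝ (Fin n → ℝ)).symm : (Fin n → ℝ) →ₗ[ℝ] EuclideanSpace ℝ (Fin n)) ∘ₗ
          (Matrix.toLin' (Matrix.diagonal a)) ∘ₗ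
          (((WithLp.linearEquiv 2 ℝ (Fin n → ℝ)).symm.symm :
            EuclideanSpace ℝ (Fin n) →ₗ[ℝ] (Fin n → ℝ))) := by
      apply LinearMap.ext; intro v
      ext i
      simp [hT, Matrix.toLin'_apply, Matrix.mulVec_diagonal]
    rw [h1, LinearMap.det_conj, LinearMap.det_toLin', Matrix.det_diagonal]
  -- indicator functions
  set H : ℝ → ℝ := fun r => if r^2 < k then k - r^2 else 0 with hH
  set G : EuclideanSpace ℝ (Fin n) → ℝ := fun z => if Q z < k then k - Q z else 0 with hG
  -- Step 1 : reduce to ∫ G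
  have step1 : (∫ y in {y | f y < f x + ⟪gradient f x, y - x⟫ + k},
      (f x + ⟪gradient f x, y - x⟫ + k - f y)) = ∫ z, G z := by
    rw [hSeq, setIntegral_congr_fun hSmeas (fun y _ => key y), ← integral_indicator hSmeas]
    have hind : (Set.indicator ((fun y : EuclideanSpace ℝ (Fin n) => Q (y - x)) ⁻¹' Iio k)
        fun y => k - Q (y - x)) = fun y => G (y - x) := by
      funext y
      rw [Set.indicator_apply]
      by_cases h : Q (y - x) < k
      · simp [Set.mem_preimage, hG, h]
      · simp [Set.mem_preimage, hG, h]
    rw [hind]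
    have : (fun y : EuclideanSpace ℝ (Fin n) => G (y - x))
        = fun y : EuclideanSpace ℝ (Fin n) => G (y + (-x)) := by
      funext y; rw [sub_eq_add_neg]
    rw [this]
    exact integral_add_right_eq_self G (-x)
  -- Step 2 : linear change of variables
  have hmap : Measure.map (⇑T) (volume : Measure (EuclideanSpace ℝ (Fin n)))
      = ENNReal.ofReal ((∏ i, a i)⁻¹) • volume := by
    have h := Measure.map_linearMap_addHaar_eq_smul_addHaar
      (volume : Measure (EuclideanSpace ℝ (Fin n)))
      (f := (T : EuclideanSpace ℝ (Fin n) →ₗ[ℝ] EuclideanSpace ℝ (Fin n)))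
      (by rw [hdet]; exact hprod.ne')
    rw [hdet] at h
    rw [abs_of_pos (by positivity)] at h
    exact h
  have hTmeas : MeasurableEmbedding (⇑T) :=
    T.toContinuousLinearEquiv.toHomeomorph.measurableEmbedding
  have hGT : ∀ z, G z = H ‖T z‖ := by
    intro z
    have hnorm : ‖T z‖^2 = Q z := by
      rw [EuclideanSpace.norm_eq, Real.sq_sqrt (by positivity)]
      refine Finset.sum_congr rfl fun i _ => ?_
      rw [hTapp, Real.norm_eq_abs, sq_abs]
      ring
    rw [hG, hH]
    simp only [hnorm]
  have step2 : ∫ z, G z = (∏ i, a i)⁻¹ *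
      ∫ w : EuclideanSpace ℝ (Fin n), H ‖w‖ := by
    calc ∫ z, G z = ∫ z, H ‖T z‖ := by simp only [hGT]
      _ = ∫ w, H ‖w‖ ∂(Measure.map (⇑T) volume) := (hTmeas.integral_map (fun w => H ‖w‖)).symm
      _ = (∏ i, a i)⁻¹ * ∫ w : EuclideanSpace ℝ (Fin n), H ‖w‖ := by
          rw [hmap, integral_smul_measure, ENNReal.toReal_ofReal (by positivity)]
          simp [smul_eq_mul]
  -- Step 3 : polar-type formula
  haveI : Nontrivial (EuclideanSpace ℝ (Fin n)) := by
    refine ⟨⟨EuclideanSpace.single ⟨0, hn⟩ 1, 0, fun h => ?_⟩⟩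
    have h2 := congrArg (fun v : EuclideanSpace ℝ (Fin n) => v ⟨0, hn⟩) h
    simp [EuclideanSpace.single_apply] at h2
  have step3 : (∫ w : EuclideanSpace ℝ (Fin n), H ‖w‖)
      = n • (volume (Metric.ball (0 : EuclideanSpace ℝ (Fin n)) 1)).toReal •
        ∫ y in Ioi (0:ℝ), y ^ (n - 1) • H y := by
    have h := integral_fun_norm_addHaar (volume : Measure (EuclideanSpace ℝ (Fin n))) H
    rwa [finrank_euclideanSpace_fin] at h
  -- Step 4 : the one-dimensional integral
  set s : ℝ := Real.sqrt k with hs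
  have hs0 : 0 < s := Real.sqrt_pos.2 hk
  have hsk : s^2 = k := Real.sq_sqrt hk.le
  have h1d : (∫ y in Ioi (0:ℝ), y ^ (n - 1) • H y) = s^(n+2) * (2 / ((n:ℝ) * ((n:ℝ)+2))) := by
    have heq : EqOn (fun y : ℝ => y ^ (n-1) • H y)
        ((Ioo (0:ℝ) s).indicator fun y => y^(n-1) * (k - y^2)) (Ioi 0) := by
      intro y hy
      have hy0 : (0:ℝ) < y := hy
      by_cases h : y^2 < k
      · have hys : y < s := by nlinarith
        rw [Set.indicator_of_mem (Set.mem_Ioo.mpr ⟨hy0, hys⟩)]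
        simp [hH, h, smul_eq_mul]
      · have hys : ¬ y < s := fun hc => h (by nlinarith)
        rw [Set.indicator_of_notMem (fun hc => hys (Set.mem_Ioo.mp hc).2)]
        simp [hH, h]
    rw [setIntegral_congr_fun measurableSet_Ioi heq,
      setIntegral_indicator measurableSet_Ioo]
    have hIoo : Ioi (0:ℝ) ∩ Ioo 0 s = Ioo 0 s :=
      inter_eq_self_of_subset_right fun y hy => hy.1
    rw [hIoo, ← integral_Ioc_eq_integral_Ioo, ← intervalIntegral.integral_of_le hs0.le]
    have hpoly : ∀ y : ℝ, y^(n-1) * (k - y^2) = k * y^(n-1) - y^(n+1) := by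
      intro y
      have h2 : y^(n-1) * y^2 = y^(n+1) := by
        rw [← pow_add]; congr 1; omega
      rw [mul_sub, mul_comm (y^(n-1)) k, h2]
    calc (∫ y in (0:ℝ)..s, y^(n-1) * (k - y^2))
        = ∫ y in (0:ℝ)..s, (k * y^(n-1) - y^(n+1)) := by simp only [hpoly]
      _ = k * (s^n / n) - s^(n+2) / ((n:ℝ)+2) := by
          rw [intervalIntegral.integral_sub
            ((intervalIntegral.intervalIntegrable_pow _).const_mul k)
            (intervalIntegral.intervalIntegrable_pow _),
            intervalIntegral.integral_const_mul, integral_pow, integral_pow]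
          have e1 : n - 1 + 1 = n := by omega
          have e2 : ((n - 1 : ℕ) : ℝ) + 1 = n := by
            rw [Nat.cast_sub hn]; push_cast; ring
          have e3 : ((n + 1 : ℕ) : ℝ) + 1 = (n:ℝ) + 2 := by push_cast; ring
          rw [e1, e2, e3]
          rw [zero_pow (by omega : n ≠ 0), zero_pow (by omega : n + 1 + 1 ≠ 0)]
          ring
      _ = s^(n+2) * (2 / ((n:ℝ) * ((n:ℝ)+2))) := by
          have hks : k * s^n = s^(n+2) := by rw [← hsk]; ring
          have hn2 : ((n:ℝ)+2) ≠ 0 := by positivity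
          field_simp
          nlinarith [hks]
  -- Step 5 : powers of k
  have hsnk : s^(n+2) = k ^ (((n : ℝ) + 2) / 2) := by
    rw [hs, Real.sqrt_eq_rpow, ← Real.rpow_natCast (k ^ ((1:ℝ)/2)) (n+2),
      ← Real.rpow_mul hk.le]
    congr 1
    push_cast
    ring
  -- final assembly
  rw [step1, step2, step3, h1d, nsmul_eq_mul, smul_eq_mul, hsnk]
  have hω : (0:ℝ) ≤ (volume (Metric.ball (0 : EuclideanSpace ℝ (Fin n)) 1)).toReal :=
    ENNReal.toReal_nonneg
  field_simp
end

section
/- Let n ≥ 1, let g : (0,∞) → ℝ, and let f : ℝⁿ → ℝ be a continuous positive function satisfying ∫_{B(q,r)} f(y) dy = f(q) · g(r) for all q ∈ ℝⁿ and all r > 0. If f has a local maximum at some point q₀ ∈ ℝⁿ, then there exists r₀ > 0 such that g(r) ≤ ω_n · rⁿ for all 0 < r < r₀, where ω_n is the Lebesgue measure of the unit ball in ℝⁿ. -/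
open MeasureTheory Filter
open scoped RealInnerProductSpace Topology

theorem mean_value_local_max (n : ℕ) (hn : 1 ≤ n) (g : ℝ → ℝ)
    (f : EuclideanSpace ℝ (Fin n) → ℝ) (hf : Continuous f) (hpos : ∀ x, 0 < f x)
    (hmean : ∀ (q : EuclideanSpace ℝ (Fin n)) (r : ℝ), 0 < r →
      (∫ y in Metric.ball q r, f y) = f q * g r)
    (q₀ : EuclideanSpace ℝ (Fin n)) (hq₀ : IsLocalMax f q₀) :
    ∃ r₀ > 0, ∀ r : ℝ, 0 < r → r < r₀ →
      g r ≤ (volume (Metric.ball (0 : EuclideanSpace ℝ (Fin n)) 1)).toReal * r ^ n := by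
  obtain ⟨r₀, hr₀, hball⟩ := Metric.mem_nhds_iff.mp hq₀
  refine ⟨r₀, hr₀, fun r hr hrr₀ => ?_⟩
  have hvol : volume (Metric.ball q₀ r) < ⊤ := measure_ball_lt_top
  have hint : IntegrableOn f (Metric.ball q₀ r) volume :=
    (hf.continuousOn.integrableOn_compact (ProperSpace.isCompact_closedBall q₀ r)).mono_set
      Metric.ball_subset_closedBall
  have hle : (∫ y in Metric.ball q₀ r, f y) ≤ ∫ _ in Metric.ball q₀ r, f q₀ := by
    refine setIntegral_mono_on hint (integrableOn_const hvol.ne)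
      measurableSet_ball fun x hx => hball ?_
    exact Metric.ball_subset_ball hrr₀.le hx
  rw [hmean q₀ r hr, setIntegral_const, smul_eq_mul] at hle
  haveI : Nonempty (Fin n) := ⟨⟨0, hn⟩⟩
  haveI : Nontrivial (EuclideanSpace ℝ (Fin n)) := inferInstance
  have hmeas : (volume (Metric.ball q₀ r)).toReal
      = (volume (Metric.ball (0 : EuclideanSpace ℝ (Fin n)) 1)).toReal * r ^ n := by
    rw [Measure.addHaar_ball volume q₀ hr.le, ENNReal.toReal_mul, ENNReal.toReal_ofReal
      (pow_nonneg hr.le _), finrank_euclideanSpace_fin, mul_comm]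
  rw [measureReal_def, hmeas] at hle
  have := (hpos q₀)
  nlinarith [hle, this]
end

section
/- Let n ≥ 1, let g : (0,∞) → ℝ, and let f : ℝⁿ → ℝ be a continuous positive function satisfying ∫_{B(q,r)} f(y) dy = f(q) · g(r) for all q ∈ ℝⁿ and all r > 0. If f has a local minimum at some point q₀ ∈ ℝⁿ, then there exists r₀ > 0 such that g(r) ≥ ω_n · rⁿ for all 0 < r < r₀, where ω_n is the Lebesgue measure of the unit ball in ℝⁿ. -/
open MeasureTheory Filter
open scoped RealInnerProductSpace Topology

theorem mean_value_local_min (n : ℕ) (hn : 1 ≤ n) (g : ℝ → ℝ)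
    (f : EuclideanSpace ℝ (Fin n) → ℝ) (hf : Continuous f) (hpos : ∀ x, 0 < f x)
    (hmean : ∀ (q : EuclideanSpace ℝ (Fin n)) (r : ℝ), 0 < r →
      (∫ y in Metric.ball q r, f y) = f q * g r)
    (q₀ : EuclideanSpace ℝ (Fin n)) (hq₀ : IsLocalMin f q₀) :
    ∃ r₀ > 0, ∀ r : ℝ, 0 < r → r < r₀ →
      (volume (Metric.ball (0 : EuclideanSpace ℝ (Fin n)) 1)).toReal * r ^ n ≤ g r := by
  obtain ⟨r₀, hr₀, hmin⟩ := Metric.eventually_nhds_iff_ball.mp hq₀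
  refine ⟨r₀, hr₀, fun r hr hrr₀ => ?_⟩
  have hball : Metric.ball q₀ r ⊆ Metric.ball q₀ r₀ :=
    Metric.ball_subset_ball hrr₀.le
  have hint : IntegrableOn f (Metric.ball q₀ r) volume :=
    (hf.continuousOn.integrableOn_compact (isCompact_closedBall q₀ r)).mono_set
      Metric.ball_subset_closedBall
  have hvol : volume (Metric.ball q₀ r) =
      ENNReal.ofReal (r ^ n) * volume (Metric.ball (0 : EuclideanSpace ℝ (Fin n)) 1) := by
    haveI : Nonempty (Fin n) := Fin.pos_iff_nonempty.mp hn
    simpa [finrank_euclideanSpace, Fintype.card_fin] using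
      Measure.addHaar_ball (volume : Measure (EuclideanSpace ℝ (Fin n))) q₀ hr.le
  have hlb : f q₀ * (volume (Metric.ball q₀ r)).toReal ≤ ∫ y in Metric.ball q₀ r, f y :=
    setIntegral_ge_of_const_le_real measurableSet_ball
      measure_ball_lt_top.ne (fun x hx => hmin x (hball hx)) hint
  rw [hmean q₀ r hr] at hlb
  have h2 : (volume (Metric.ball q₀ r)).toReal ≤ g r :=
    le_of_mul_le_mul_left (by linarith [hlb]) (hpos q₀)
  have h3 : (volume (Metric.ball q₀ r)).toReal =
      r ^ n * (volume (Metric.ball (0 : EuclideanSpace ℝ (Fin n)) 1)).toReal := by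
    rw [hvol, ENNReal.toReal_mul, ENNReal.toReal_ofReal (by positivity)]
  rw [h3] at h2
  linarith [h2]
end

section
/- Let n ≥ 1, let g : (0,∞) → ℝ, and let f : ℝⁿ → ℝ be a smooth function satisfying ∫_{B(q,r)} f(y) dy = f(q) · g(r) for all q ∈ ℝⁿ and all r > 0. Then for each i = 1, …, n, the partial derivative ∂f/∂x_i also satisfies ∫_{B(q,r)} (∂f/∂x_i)(y) dy = (∂f/∂x_i)(q) · g(r) for all q ∈ ℝⁿ and all r > 0. -/
open MeasureTheory Filter
open scoped RealInnerProductSpace Topology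

theorem mean_value_partial_deriv (n : ℕ) (hn : 1 ≤ n) (g : ℝ → ℝ)
    (f : EuclideanSpace ℝ (Fin n) → ℝ) (hf : ContDiff ℝ (⊤ : ℕ∞) f)
    (hmean : ∀ (q : EuclideanSpace ℝ (Fin n)) (r : ℝ), 0 < r →
      (∫ y in Metric.ball q r, f y) = f q * g r) :
    ∀ (i : Fin n) (q : EuclideanSpace ℝ (Fin n)) (r : ℝ), 0 < r →
      (∫ y in Metric.ball q r, fderiv ℝ f y (EuclideanSpace.single i 1)) =
        fderiv ℝ f q (EuclideanSpace.single i 1) * g r := by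
  intro i q r hr
  have hdiff : Differentiable ℝ f := hf.differentiable (by simp)
  have hcont : Continuous f := hf.continuous
  have hfd : Continuous (fderiv ℝ f) := hf.continuous_fderiv (by simp)
  -- translation of set integrals
  have htrans : ∀ {G : Type} [NormedAddCommGroup G] [NormedSpace ℝ G]
      (h : EuclideanSpace ℝ (Fin n) → G) (x : EuclideanSpace ℝ (Fin n)),
      (∫ y in Metric.ball x r, h y) =
        ∫ y in Metric.ball (0 : EuclideanSpace ℝ (Fin n)) r, h (x + y) := by
    intro G _ _ h x
    have hmp := measurePreserving_add_left (volume : Measure (EuclideanSpace ℝ (Fin n))) x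
    have hemb := (MeasurableEquiv.addLeft x (G := EuclideanSpace ℝ (Fin n))).measurableEmbedding
    have key := hmp.setIntegral_preimage_emb hemb h (Metric.ball x r)
    have hpre : (x + ·) ⁻¹' Metric.ball x r = Metric.ball (0 : EuclideanSpace ℝ (Fin n)) r := by
      ext y
      simp [Metric.mem_ball, dist_eq_norm]
    rw [← key, hpre]
  obtain ⟨C, hC⟩ : ∃ C, ∀ x ∈ Metric.closedBall q (1 + r), ‖fderiv ℝ f x‖ ≤ C :=
    (isCompact_closedBall q (1 + r)).exists_bound_of_continuousOn hfd.continuousOn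
  have hball_mem : ∀ᵐ a ∂(volume.restrict (Metric.ball (0 : EuclideanSpace ℝ (Fin n)) r)),
      a ∈ Metric.ball (0 : EuclideanSpace ℝ (Fin n)) r := ae_restrict_mem measurableSet_ball
  have hmain : HasFDerivAt
      (fun x => ∫ a in Metric.ball (0 : EuclideanSpace ℝ (Fin n)) r, f (x + a))
      (∫ a in Metric.ball (0 : EuclideanSpace ℝ (Fin n)) r, fderiv ℝ f (q + a)) q := by
    apply hasFDerivAt_integral_of_dominated_of_fderiv_le
      (F' := fun x a => fderiv ℝ f (x + a)) (bound := fun _ => C) (s := Metric.ball q 1) (Metric.ball_mem_nhds q one_pos)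
    · exact Eventually.of_forall fun x =>
        (hcont.comp (continuous_const.add continuous_id)).aestronglyMeasurable
    · exact ((hcont.comp (continuous_const.add continuous_id)).locallyIntegrable.integrableOn_isCompact
        (isCompact_closedBall (0 : EuclideanSpace ℝ (Fin n)) r)).mono_set
        Metric.ball_subset_closedBall
    · exact (hfd.comp (continuous_const.add continuous_id)).aestronglyMeasurable
    · refine hball_mem.mono fun a ha x hx => ?_
      apply hC
      have h3 : ‖x + a - q‖ ≤ ‖x - q‖ + ‖a‖ := by
        rw [show x + a - q = (x - q) + a by abel]; exact norm_add_le _ _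
      simp only [Metric.mem_closedBall, dist_eq_norm]
      have h1 : ‖x - q‖ ≤ 1 := le_of_lt (by simpa [dist_eq_norm] using hx)
      have h2 : ‖a‖ ≤ r := le_of_lt (by simpa [dist_eq_norm] using ha)
      linarith
    · exact integrableOn_const measure_ball_lt_top.ne
    · refine Eventually.of_forall fun a x _ => ?_
      have h1 : HasFDerivAt (fun x : EuclideanSpace ℝ (Fin n) => x + a)
          (ContinuousLinearMap.id ℝ (EuclideanSpace ℝ (Fin n))) x :=
        (hasFDerivAt_id x).add_const a
      have h2 := (hdiff (x + a)).hasFDerivAt.comp x h1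
      simpa [Function.comp_def] using h2
  have heq : (fun x => ∫ a in Metric.ball (0 : EuclideanSpace ℝ (Fin n)) r, f (x + a))
      = fun x => f x * g r := by
    funext x
    rw [← htrans f x, hmean x r hr]
  rw [heq] at hmain
  have hmain2 : HasFDerivAt (fun x => f x * g r) (g r • fderiv ℝ f q) q := by
    have := ((hdiff q).hasFDerivAt).const_smul (g r)
    simpa [Pi.smul_def, smul_eq_mul, mul_comm] using this
  have hF := hmain.unique hmain2
  have hint : IntegrableOn (fun a => fderiv ℝ f (q + a))
      (Metric.ball (0 : EuclideanSpace ℝ (Fin n)) r) volume :=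
    ((hfd.comp (continuous_const.add continuous_id)).locallyIntegrable.integrableOn_isCompact
      (isCompact_closedBall (0 : EuclideanSpace ℝ (Fin n)) r)).mono_set
      Metric.ball_subset_closedBall
  have happly : (∫ a in Metric.ball (0 : EuclideanSpace ℝ (Fin n)) r, fderiv ℝ f (q + a))
        (EuclideanSpace.single i 1) =
      ∫ a in Metric.ball (0 : EuclideanSpace ℝ (Fin n)) r,
        fderiv ℝ f (q + a) (EuclideanSpace.single i 1) :=
    ContinuousLinearMap.integral_apply hint (EuclideanSpace.single i 1)
  rw [htrans (fun y => fderiv ℝ f y (EuclideanSpace.single i 1)) q, ← happly, hF]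
  simp [smul_eq_mul, mul_comm]
end

section
/- Let n ≥ 1 and let a₁, …, a_n > 0, and define V : ℝⁿ → ℝ by V(y) = √(1 + 4 Σ_{i=1}^n a_i² y_i²). Then there is NO function g : (0,∞) → ℝ such that ∫_{B(q,r)} V(y) dy = V(q) · g(r) for all q ∈ ℝⁿ and all r > 0, where B(q,r) is the open ball of radius r centered at q. -/
open MeasureTheory Filter
open scoped RealInnerProductSpace Topology

set_option maxHeartbeats 1600000 in
theorem no_mean_value_function_for_V (n : ℕ) (hn : 1 ≤ n) (a : Fin n → ℝ)
    (ha : ∀ i, 0 < a i) :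
    ¬ ∃ g : ℝ → ℝ, ∀ (q : EuclideanSpace ℝ (Fin n)) (r : ℝ), 0 < r →
      (∫ y in Metric.ball q r, Real.sqrt (1 + 4 * ∑ i, (a i) ^ 2 * (y i) ^ 2)) =
        Real.sqrt (1 + 4 * ∑ i, (a i) ^ 2 * (q i) ^ 2) * g r := by
  classical
  rintro ⟨g, hg⟩
  set V : EuclideanSpace ℝ (Fin n) → ℝ :=
    fun y => Real.sqrt (1 + 4 * ∑ i, (a i) ^ 2 * (y i) ^ 2) with hVdef
  set i0 : Fin n := ⟨0, hn⟩ with hi0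
  haveI : Nontrivial (EuclideanSpace ℝ (Fin n)) := by
    refine ⟨⟨EuclideanSpace.single i0 1, 0, fun h => ?_⟩⟩
    have := congrArg (fun v : EuclideanSpace ℝ (Fin n) => v i0) h
    simp [EuclideanSpace.single_apply] at this
  have hsum : ∀ y : EuclideanSpace ℝ (Fin n), (0:ℝ) ≤ ∑ i, (a i)^2 * (y i)^2 :=
    fun y => Finset.sum_nonneg fun i _ => by positivity
  have hV1 : ∀ y, (1:ℝ) ≤ V y := fun y => Real.one_le_sqrt.mpr (by nlinarith [hsum y])
  have hVcont : Continuous V := by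
    apply Real.continuous_sqrt.comp
    fun_prop
  have hInt : ∀ (q : EuclideanSpace ℝ (Fin n)) (r : ℝ),
      IntegrableOn V (Metric.ball q r) := fun q r =>
    (hVcont.locallyIntegrable.integrableOn_isCompact
      (ProperSpace.isCompact_closedBall q r)).mono_set Metric.ball_subset_closedBall
  set K : ℝ := (volume (Metric.ball (0 : EuclideanSpace ℝ (Fin n)) 1)).toReal with hK
  have hballvol : ∀ q : EuclideanSpace ℝ (Fin n),
      volume (Metric.ball q 1) = volume (Metric.ball (0 : EuclideanSpace ℝ (Fin n)) 1) :=
    fun q => Measure.addHaar_ball_center _ _ _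
  have hKpos : 0 < K := ENNReal.toReal_pos (Metric.measure_ball_pos _ _ one_pos).ne'
    measure_ball_lt_top.ne
  set m : ℝ := ∑ i, (a i)^2 with hm
  have hm0 : (0:ℝ) ≤ m := Finset.sum_nonneg fun i _ => sq_nonneg _
  -- key pointwise bound: V y ≤ V q + 2√m on ball q 1
  have key : ∀ (q y : EuclideanSpace ℝ (Fin n)), y ∈ Metric.ball q 1 →
      V y ≤ V q + 2 * Real.sqrt m := by
    intro q y hy
    set t : ℝ := ∑ i, (a i)^2 * (q i)^2 with ht
    set s : ℝ := ∑ i, (a i)^2 * (y i)^2 with hs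
    have ht0 : 0 ≤ t := hsum q
    have hzsum : ∑ i, (a i)^2 * (y i - q i)^2 ≤ m := by
      have hnorm : ‖y - q‖ < 1 := by
        rw [← dist_eq_norm, ← Metric.mem_ball]; exact hy
      have hsq : ∀ i, (y i - q i)^2 ≤ 1 := by
        intro i
        have h1 : (y i - q i)^2 ≤ ∑ j, (y j - q j)^2 :=
          Finset.single_le_sum (f := fun j => (y j - q j)^2)
            (fun j _ => sq_nonneg _) (Finset.mem_univ i)
        have h2 : Real.sqrt (∑ j, (y j - q j)^2) = ‖y - q‖ := by
          rw [EuclideanSpace.norm_eq]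
          congr 1
          refine Finset.sum_congr rfl fun j _ => ?_
          simp [Real.norm_eq_abs, sq_abs]
        have h3 : ∑ j, (y j - q j)^2 < 1 := by
          have h4 : ∑ j, (y j - q j)^2 = ‖y - q‖^2 := by
            rw [← h2, Real.sq_sqrt (Finset.sum_nonneg fun j _ => sq_nonneg _)]
          rw [h4]
          nlinarith [norm_nonneg (y - q)]
        linarith [h1, h3]
      calc ∑ i, (a i)^2 * (y i - q i)^2 ≤ ∑ i, (a i)^2 * 1 :=
            Finset.sum_le_sum fun i _ => by nlinarith [hsq i, sq_nonneg (a i)]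
        _ = m := by simp [hm]
    have hz0 : (0:ℝ) ≤ ∑ i, (a i)^2 * (y i - q i)^2 :=
      Finset.sum_nonneg fun i _ => by positivity
    have hcs : ∑ i, (a i * q i) * (a i * (y i - q i)) ≤ Real.sqrt t * Real.sqrt m := by
      have h1 := Real.sum_mul_le_sqrt_mul_sqrt Finset.univ
        (fun i => a i * q i) (fun i => a i * (y i - q i))
      have e1 : ∑ i, (a i * q i)^2 = t := by
        rw [ht]; exact Finset.sum_congr rfl fun i _ => by ring
      have e2 : ∑ i, (a i * (y i - q i))^2 = ∑ i, (a i)^2 * (y i - q i)^2 :=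
        Finset.sum_congr rfl fun i _ => by ring
      rw [e1, e2] at h1
      refine h1.trans (mul_le_mul_of_nonneg_left (Real.sqrt_le_sqrt hzsum)
        (Real.sqrt_nonneg t))
    have hexpand : s = t + (∑ i, (a i)^2 * (y i - q i)^2)
        + 2 * ∑ i, (a i * q i) * (a i * (y i - q i)) := by
      rw [hs, ht, Finset.mul_sum, ← Finset.sum_add_distrib, ← Finset.sum_add_distrib]
      exact Finset.sum_congr rfl fun i _ => by ring
    have hsle : s ≤ t + m + 2 * (Real.sqrt t * Real.sqrt m) := by
      rw [hexpand]; linarith [hcs, hzsum]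
    -- now the sqrt inequality
    have hA : Real.sqrt (1 + 4*t) ^ 2 = 1 + 4*t := Real.sq_sqrt (by linarith)
    have hB : Real.sqrt m ^ 2 = m := Real.sq_sqrt hm0
    have hC : Real.sqrt t ^ 2 = t := Real.sq_sqrt ht0
    have h2sqt : 2 * Real.sqrt t ≤ Real.sqrt (1 + 4*t) := by
      have : (2 * Real.sqrt t) = Real.sqrt (4 * t) := by
        rw [show (4:ℝ) * t = (2:ℝ)^2 * t by ring, Real.sqrt_mul (by positivity) t,
          Real.sqrt_sq (by norm_num)]
      rw [this]
      exact Real.sqrt_le_sqrt (by linarith)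
    have hRHS0 : 0 ≤ Real.sqrt (1 + 4*t) + 2 * Real.sqrt m := by positivity
    have goal : Real.sqrt (1 + 4*s) ≤ Real.sqrt (1 + 4*t) + 2 * Real.sqrt m := by
      calc Real.sqrt (1 + 4*s)
          ≤ Real.sqrt ((Real.sqrt (1 + 4*t) + 2 * Real.sqrt m)^2) := by
            apply Real.sqrt_le_sqrt
            have hmn : 2 * Real.sqrt t * Real.sqrt m ≤ Real.sqrt (1+4*t) * Real.sqrt m :=
              mul_le_mul_of_nonneg_right h2sqt (Real.sqrt_nonneg m)
            nlinarith [hsle, hA, hB, hC, hmn, Real.sqrt_nonneg m, Real.sqrt_nonneg (1+4*t)]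
        _ = _ := Real.sqrt_sq hRHS0
    exact goal
  -- upper bound relation
  have hub : ∀ q : EuclideanSpace ℝ (Fin n), V q * g 1 ≤ (V q + 2 * Real.sqrt m) * K := by
    intro q
    have h := hg q 1 one_pos
    rw [← h]
    calc (∫ y in Metric.ball q 1, V y)
        ≤ ∫ _y in Metric.ball q 1, (V q + 2 * Real.sqrt m) :=
          setIntegral_mono_on (hInt q 1)
            (integrableOn_const measure_ball_lt_top.ne)
            measurableSet_ball (fun y hy => key q y hy)
      _ = (V q + 2 * Real.sqrt m) * K := by
          rw [setIntegral_const, smul_eq_mul, measureReal_def, hballvol q, ← hK, mul_comm]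
  -- conclude g 1 ≤ K
  have hgK : g 1 ≤ K := by
    by_contra hlt
    push_neg at hlt
    have main : ∀ t : ℝ, 0 < t →
        (g 1 - K) * (2 * a i0 * t) ≤ 2 * Real.sqrt m * K := by
      intro t htpos
      have hqsum : ∑ i, (a i)^2 *
          ((EuclideanSpace.single i0 t : EuclideanSpace ℝ (Fin n)) i)^2
          = (a i0)^2 * t^2 := by
        simp [EuclideanSpace.single_apply, apply_ite (· ^ 2), mul_ite, Finset.sum_ite_eq']
      have hpos2 : (0:ℝ) < 2 * a i0 * t := by
        have := ha i0; nlinarith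
      have hVq : 2 * a i0 * t ≤ V (EuclideanSpace.single i0 t) := by
        have h1 : Real.sqrt ((2 * a i0 * t)^2) = 2 * a i0 * t :=
          Real.sqrt_sq hpos2.le
        have h2 : (2 * a i0 * t)^2 ≤ 1 + 4 * ((a i0)^2 * t^2) := by nlinarith
        have h3 := Real.sqrt_le_sqrt h2
        rw [h1] at h3
        show (2 * a i0 * t) ≤ Real.sqrt (1 + 4 * ∑ i, (a i)^2 *
          ((EuclideanSpace.single i0 t : EuclideanSpace ℝ (Fin n)) i)^2)
        rw [hqsum]
        exact h3
      have h3 := hub (EuclideanSpace.single i0 t)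
      nlinarith [h3, hVq, hlt]
    have hd0 : (0:ℝ) < g 1 - K := by linarith
    have hden : (0:ℝ) < (g 1 - K) * (2 * a i0) := by nlinarith [ha i0]
    have hnum : (0:ℝ) < 2 * Real.sqrt m * K + 1 := by positivity
    have ht : (0:ℝ) < (2 * Real.sqrt m * K + 1) / ((g 1 - K) * (2 * a i0)) :=
      div_pos hnum hden
    have hmain := main _ ht
    have heq : (g 1 - K) * (2 * a i0 *
        ((2 * Real.sqrt m * K + 1) / ((g 1 - K) * (2 * a i0))))
        = 2 * Real.sqrt m * K + 1 := by
      field_simp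
      exact mul_inv_cancel₀ (ha i0).ne'
    rw [heq] at hmain
    linarith
  -- lower bound: g 1 = ∫_{B(0,1)} V > K
  have hV0 : V 0 = 1 := by
    rw [hVdef]
    have : ∑ i, (a i)^2 * ((0 : EuclideanSpace ℝ (Fin n)) i)^2 = 0 := by
      refine Finset.sum_eq_zero fun i _ => ?_
      simp
    simp only []
    rw [this]
    norm_num
  have h0 := hg 0 1 one_pos
  rw [show Real.sqrt (1 + 4 * ∑ i, (a i) ^ 2 * ((0 : EuclideanSpace ℝ (Fin n)) i) ^ 2) = 1
    from hV0, one_mul] at h0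
  -- h0 : ∫ y in ball 0 1, V y = g 1
  have hIone : IntegrableOn (fun _ : EuclideanSpace ℝ (Fin n) => (1:ℝ))
      (Metric.ball (0 : EuclideanSpace ℝ (Fin n)) 1) :=
    integrableOn_const measure_ball_lt_top.ne
  have hpos : 0 < ∫ y in Metric.ball (0 : EuclideanSpace ℝ (Fin n)) 1, (V y - 1) := by
    refine (setIntegral_pos_iff_support_of_nonneg_ae
      (ae_of_all _ fun y => sub_nonneg.mpr (hV1 y)) ((hInt 0 1).sub hIone)).mpr ?_
    have hsupp : Metric.ball (0 : EuclideanSpace ℝ (Fin n)) 1 \ {0} ⊆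
        Function.support (fun y => V y - 1) ∩ Metric.ball 0 1 := by
      rintro y ⟨hyb, hy0⟩
      refine ⟨?_, hyb⟩
      have hy0' : y ≠ 0 := by simpa using hy0
      obtain ⟨i, hi⟩ : ∃ i, y i ≠ 0 := by
        by_contra hall
        push_neg at hall
        exact hy0' (by ext i; simpa using hall i)
      have hspos : 0 < ∑ j, (a j)^2 * (y j)^2 :=
        Finset.sum_pos' (fun j _ => by positivity)
          ⟨i, Finset.mem_univ i, mul_pos (pow_pos (ha i) 2) (sq_pos_of_ne_zero hi)⟩
      have : 1 < V y := by
        rw [hVdef]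
        exact (Real.lt_sqrt zero_le_one).mpr (by nlinarith)
      simp only [Function.mem_support]
      intro hcontra
      rw [sub_eq_zero] at hcontra
      rw [hcontra] at this
      exact lt_irrefl _ this
    calc (0:ENNReal) < volume (Metric.ball (0 : EuclideanSpace ℝ (Fin n)) 1 \ {0}) := by
          rw [measure_diff_null (measure_singleton _)]
          exact Metric.measure_ball_pos _ _ one_pos
      _ ≤ _ := measure_mono hsupp
  have hsub : (∫ y in Metric.ball (0 : EuclideanSpace ℝ (Fin n)) 1, (V y - 1))
      = (∫ y in Metric.ball (0 : EuclideanSpace ℝ (Fin n)) 1, V y) - K := by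
    rw [integral_sub (hInt 0 1) hIone, setIntegral_const, smul_eq_mul, mul_one, measureReal_def, hK]
  rw [hsub, h0] at hpos
  linarith
end

section
/- Let n ≥ 1, let a₁, …, a_n > 0, and let f : ℝⁿ → ℝ be given by f(x) = Σ_{i=1}^n a_i² x_i². Then for every x ∈ ℝⁿ and every k > 0, S*_x(k) = (1/(a₁ a₂ ⋯ a_n)) · ∫_{B(q,√k)} √(1 + 4 Σ_{i=1}^n a_i² y_i²) dy, where q = (a₁ x₁, …, a_n x_n), B(q,√k) is the open ball of radius √k centered at q, and S*_x(k) = ∫_{{y : f(y) < f(x) + ⟨∇f(x), y − x⟩ + k}} √(1 + ‖∇f(y)‖²) dy. -/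
open MeasureTheory Filter
open scoped RealInnerProductSpace Topology

section aux

variable {n : ℕ} (a : Fin n → ℝ)

/-- diagonal linear map on Euclidean space -/
noncomputable def diagL : EuclideanSpace ℝ (Fin n) →ₗ[ℝ] EuclideanSpace ℝ (Fin n) where
  toFun y := WithLp.toLp 2 fun i => a i * y i
  map_add' y z := by ext i; exact mul_add _ _ _
  map_smul' c y := by ext i; exact mul_left_comm _ _ _

lemma diagL_det : LinearMap.det (diagL a) = ∏ i, a i := by
  classical
  rw [← LinearMap.det_toMatrix (EuclideanSpace.basisFun (Fin n) ℝ).toBasis]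
  have : LinearMap.toMatrix (EuclideanSpace.basisFun (Fin n) ℝ).toBasis
      (EuclideanSpace.basisFun (Fin n) ℝ).toBasis (diagL a) = Matrix.diagonal a := by
    ext i j
    simp [LinearMap.toMatrix_apply, diagL, EuclideanSpace.basisFun_repr,
      EuclideanSpace.basisFun_apply, EuclideanSpace.single_apply, Matrix.diagonal]
  rw [this, Matrix.det_diagonal]

lemma hasGradientAt_paraboloid (f : EuclideanSpace ℝ (Fin n) → ℝ)
    (hf : ∀ x, f x = ∑ i, (a i) ^ 2 * (x i) ^ 2) (y : EuclideanSpace ℝ (Fin n)) :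
    HasGradientAt f (show EuclideanSpace ℝ (Fin n) from WithLp.toLp 2 fun i => 2 * (a i) ^ 2 * y i) y := by
  rw [hasGradientAt_iff_hasFDerivAt]
  have h1 : HasFDerivAt f (∑ i, (2 * (a i) ^ 2 * y i) • (EuclideanSpace.proj i :
      EuclideanSpace ℝ (Fin n) →L[ℝ] ℝ)) y := by
    have : HasFDerivAt (fun z : EuclideanSpace ℝ (Fin n) => ∑ i, (a i) ^ 2 * (z i) ^ 2)
        (∑ i, (2 * (a i) ^ 2 * y i) • (EuclideanSpace.proj i :
          EuclideanSpace ℝ (Fin n) →L[ℝ] ℝ)) y := by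
      apply HasFDerivAt.fun_sum
      intro i _
      have hp : HasFDerivAt (fun z : EuclideanSpace ℝ (Fin n) => z i)
          (EuclideanSpace.proj i : EuclideanSpace ℝ (Fin n) →L[ℝ] ℝ) y :=
        (EuclideanSpace.proj (𝕜 := ℝ) i).hasFDerivAt.congr_of_eventuallyEq
          (Eventually.of_forall fun z => rfl)
      have := ((hp.mul hp).const_mul ((a i) ^ 2))
      refine (this.congr_of_eventuallyEq (Eventually.of_forall fun z => ?_)).congr_fderiv ?_
      · show a i ^ 2 * z i ^ 2 = a i ^ 2 * (z i * z i); ring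
      · rw [← add_smul, smul_smul, show a i ^ 2 * (y i + y i) = 2 * a i ^ 2 * y i by ring]
    exact this.congr_of_eventuallyEq (Eventually.of_forall hf)
  refine h1.congr_fderiv ?_
  ext v
  simp [InnerProductSpace.toDual_apply_apply, PiLp.inner_apply, RCLike.inner_apply]
  exact Finset.sum_congr rfl fun _ _ => mul_comm _ _

end aux

theorem paraboloid_surface_area_as_ball_integral (n : ℕ) (hn : 1 ≤ n) (a : Fin n → ℝ)
    (ha : ∀ i, 0 < a i) (f : EuclideanSpace ℝ (Fin n) → ℝ)
    (hf : ∀ x, f x = ∑ i, (a i) ^ 2 * (x i) ^ 2)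
    (x : EuclideanSpace ℝ (Fin n)) (k : ℝ) (hk : 0 < k) :
    (∫ y in {y | f y < f x + ⟪gradient f x, y - x⟫ + k},
        Real.sqrt (1 + ‖gradient f y‖ ^ 2)) =
      (1 / ∏ i, a i) *
        ∫ y in Metric.ball (show EuclideanSpace ℝ (Fin n) from WithLp.toLp 2 fun i => a i * x i)
            (Real.sqrt k),
          Real.sqrt (1 + 4 * ∑ i, (a i) ^ 2 * (y i) ^ 2) := by
  classical
  have hprod : 0 < ∏ i, a i := Finset.prod_pos fun i _ => ha i
  have hane : ∀ i, a i ≠ 0 := fun i => (ha i).ne'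
  set q : EuclideanSpace ℝ (Fin n) := WithLp.toLp 2 (fun i => a i * x i) with hq
  set S : Set (EuclideanSpace ℝ (Fin n)) :=
    {y | ∑ i, (a i) ^ 2 * (y i - x i) ^ 2 < k} with hSdef
  have hgrad : ∀ y, gradient f y =
      (show EuclideanSpace ℝ (Fin n) from WithLp.toLp 2 fun i => 2 * (a i) ^ 2 * y i) :=
    fun y => (hasGradientAt_paraboloid a f hf y).gradient
  -- the sublevel set is the ellipsoid S
  have key : ∀ y : EuclideanSpace ℝ (Fin n),
      (∑ i, (a i) ^ 2 * (y i) ^ 2) = (∑ i, (a i) ^ 2 * (x i) ^ 2) +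
        (∑ i, (2 * (a i) ^ 2 * x i) * (y i - x i)) +
        ∑ i, (a i) ^ 2 * (y i - x i) ^ 2 := by
    intro y
    rw [← Finset.sum_add_distrib, ← Finset.sum_add_distrib]
    exact Finset.sum_congr rfl fun i _ => by ring
  have hinner : ∀ y : EuclideanSpace ℝ (Fin n),
      ⟪gradient f x, y - x⟫ = ∑ i, (2 * (a i) ^ 2 * x i) * (y i - x i) := by
    intro y
    rw [hgrad]
    rw [PiLp.inner_apply]
    exact Finset.sum_congr rfl fun i _ => by
      simp [RCLike.inner_apply]; ring
  have hset : {y | f y < f x + ⟪gradient f x, y - x⟫ + k} = S := by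
    ext y
    simp only [Set.mem_setOf_eq, hf, hinner, hSdef]
    constructor
    · intro h; nlinarith [key y]
    · intro h; nlinarith [key y]
  -- S is measurable
  have hcont : Continuous fun y : EuclideanSpace ℝ (Fin n) =>
      ∑ i, (a i) ^ 2 * (y i - x i) ^ 2 :=
    continuous_finset_sum _ fun i _ => continuous_const.mul
      (((EuclideanSpace.proj (𝕜 := ℝ) i).continuous.sub continuous_const).pow 2)
  have hSopen : IsOpen S := isOpen_lt hcont continuous_const
  have hSmeas : MeasurableSet S := hSopen.measurableSet
  -- the diagonal map
  set L : EuclideanSpace ℝ (Fin n) →L[ℝ] EuclideanSpace ℝ (Fin n) :=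
    LinearMap.toContinuousLinearMap (diagL a) with hL
  have hTapp : ∀ (y : EuclideanSpace ℝ (Fin n)) i, (diagL a) y i = a i * y i :=
    fun _ _ => rfl
  have hderiv : ∀ y ∈ S, HasFDerivWithinAt (⇑(diagL a)) L S y := fun y _ =>
    (L.hasFDerivAt.congr_of_eventuallyEq
      (Eventually.of_forall fun z => rfl)).hasFDerivWithinAt
  have hinj : Set.InjOn (⇑(diagL a)) S := by
    intro y _ z _ h
    ext i
    have := congrFun (congrArg (fun (w : EuclideanSpace ℝ (Fin n)) (i : Fin n) => w i) h) i
    simp only [hTapp] at this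
    exact mul_left_cancel₀ (hane i) this
  have hdet : (L : EuclideanSpace ℝ (Fin n) →ₗ[ℝ] EuclideanSpace ℝ (Fin n)).det
      = ∏ i, a i := by
    rw [hL, LinearMap.coe_toContinuousLinearMap, diagL_det]
  -- the image of S under the diagonal map is the ball
  have hnormsq : ∀ w : EuclideanSpace ℝ (Fin n), dist w q < Real.sqrt k ↔
      ∑ i, (w i - a i * x i) ^ 2 < k := by
    intro w
    rw [EuclideanSpace.dist_eq]
    have hsum : ∑ i, dist (w i) (q i) ^ 2 = ∑ i, (w i - a i * x i) ^ 2 :=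
      Finset.sum_congr rfl fun i _ => by rw [Real.dist_eq, sq_abs]
    rw [hsum]
    exact Real.sqrt_lt_sqrt_iff (by positivity)
  have himg : (⇑(diagL a)) '' S = Metric.ball q (Real.sqrt k) := by
    ext z
    constructor
    · rintro ⟨y, hy, rfl⟩
      rw [Metric.mem_ball, hnormsq]
      have : ∑ i, ((diagL a) y i - a i * x i) ^ 2 = ∑ i, (a i) ^ 2 * (y i - x i) ^ 2 :=
        Finset.sum_congr rfl fun i _ => by rw [hTapp]; ring
      rw [this]
      exact hy
    · intro hz
      refine ⟨(WithLp.toLp 2 fun i => z i / a i : EuclideanSpace ℝ (Fin n)), ?_, ?_⟩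
      · rw [Metric.mem_ball, hnormsq] at hz
        have : ∑ i, (a i) ^ 2 * ((fun i => z i / a i) i - x i) ^ 2
            = ∑ i, (z i - a i * x i) ^ 2 := by
          refine Finset.sum_congr rfl fun i _ => ?_
          have : a i * (z i / a i - x i) = z i - a i * x i := by
            rw [mul_sub, mul_div_cancel₀ _ (hane i)]
          calc (a i) ^ 2 * (z i / a i - x i) ^ 2 = (a i * (z i / a i - x i)) ^ 2 := by ring
            _ = (z i - a i * x i) ^ 2 := by rw [this]
        simpa [hSdef, this] using hz
      · ext i
        rw [hTapp]
        rw [mul_comm, div_mul_cancel₀ _ (hane i)]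
  -- change of variables
  have hcov := integral_image_eq_integral_abs_det_fderiv_smul volume hSmeas hderiv hinj
    (fun z : EuclideanSpace ℝ (Fin n) => Real.sqrt (1 + 4 * ∑ i, (a i) ^ 2 * (z i) ^ 2))
  rw [himg] at hcov
  have hintegrand : ∀ y : EuclideanSpace ℝ (Fin n),
      Real.sqrt (1 + 4 * ∑ i, (a i) ^ 2 * ((diagL a) y i) ^ 2)
        = Real.sqrt (1 + ‖gradient f y‖ ^ 2) := by
    intro y
    have h1 : (1 : ℝ) + 4 * ∑ i, (a i) ^ 2 * ((diagL a) y i) ^ 2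
        = 1 + ∑ i, (2 * (a i) ^ 2 * y i) ^ 2 := by
      rw [Finset.mul_sum]
      congr 1
      exact Finset.sum_congr rfl fun i _ => by rw [hTapp]; ring
    have h2 : ‖gradient f y‖ ^ 2 = ∑ i, (2 * (a i) ^ 2 * y i) ^ 2 := by
      rw [hgrad, EuclideanSpace.norm_eq, Real.sq_sqrt (by positivity)]
      exact Finset.sum_congr rfl fun i _ => by simp [Real.norm_eq_abs, mul_pow, sq_abs]
    rw [h1, h2]
  have hdet' : L.det = ∏ i, a i := hdet
  rw [hset, hcov]
  simp only [hdet', abs_of_pos hprod, smul_eq_mul]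
  rw [integral_const_mul, ← mul_assoc, one_div, inv_mul_cancel₀ hprod.ne', one_mul]
  simp only [hintegrand]
end
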